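/- arXiv:1511.01114 — 4 statements merged into one kernel-verified Lean document; each statement's English description precedes it below -/
import Mathlib

section
/- For p > 1, π_p := 2∫₀¹ (1-t^p)^{-1/p} dt equals 2π/(p sin(π/p)). -/
open Real MeasureTheory Set intervalIntegral

theorem pi_p_closed_form (p : ℝ) (hp : 1 < p) :
    2 * ∫ t in (0:ℝ)..1, (1 - t ^ p) ^ (-(1/p)) =
      2 * π / (p * Real.sin (π / p)) := by
  have hp0 : (0:ℝ) < p := lt_trans one_pos hp
  have hp0' : p ≠ 0 := hp0.ne'
  have ha0 : (0:ℝ) < 1/p := by positivity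
  have ha1 : 1/p < 1 := by rw [div_lt_one hp0]; exact hp
  set g : ℝ → ℝ := fun x => x ^ (1/p - 1) * (1 - x) ^ (-(1/p)) with hg_def
  -- integrability of the target integrand
  have hA : IntervalIntegrable (fun t => (1 - t ^ p) ^ (-(1/p))) volume 0 1 := by
    have hrint : IntervalIntegrable (fun x : ℝ => x ^ (-(1/p))) volume 0 1 :=
      intervalIntegrable_rpow' (by linarith)
    have hbase : IntervalIntegrable (fun x : ℝ => (1 - x) ^ (-(1/p))) volume 0 1 := by
      simpa using (hrint.comp_sub_left 1).symm
    refine hbase.mono_fun ?_ ?_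
    · apply Measurable.aestronglyMeasurable
      exact (measurable_const.sub (measurable_id.pow_const p)).pow_const _
    · rw [uIoc_of_le (by norm_num : (0:ℝ) ≤ 1)]
      refine (ae_restrict_iff' measurableSet_Ioc).mpr (ae_of_all _ fun t ht => ?_)
      have ht0 : 0 < t := ht.1
      have ht1 : t ≤ 1 := ht.2
      have htp : t ^ p ≤ t := by
        calc t ^ p ≤ t ^ (1:ℝ) :=
          Real.rpow_le_rpow_of_exponent_ge ht0 ht1 hp.le
        _ = t := Real.rpow_one t
      have h1 : (0:ℝ) ≤ (1 - t ^ p) ^ (-(1/p)) :=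
        Real.rpow_nonneg (by nlinarith [Real.rpow_nonneg ht0.le p]) _
      have h2 : (0:ℝ) ≤ (1 - t) ^ (-(1/p)) := Real.rpow_nonneg (by linarith) _
      dsimp only
      rw [Real.norm_of_nonneg h1, Real.norm_of_nonneg h2]
      rcases eq_or_lt_of_le ht1 with h|h
      · subst h; simp [Real.one_rpow]
      · exact Real.rpow_le_rpow_of_nonpos (by linarith) (by linarith) (by linarith)
  -- complex beta integrand agrees with g on (0,1]
  have hptwise : ∀ t ∈ Ioc (0:ℝ) 1,
      (t:ℂ) ^ ((1/p : ℝ) - 1 : ℂ) * (1 - (t:ℂ)) ^ ((1 - 1/p : ℝ) - 1 : ℂ) = (g t : ℂ) := by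
    intro t ht
    have h1 : ((1/p : ℝ) : ℂ) - 1 = ((1/p - 1 : ℝ) : ℂ) := by push_cast; ring
    have h2 : ((1 - 1/p : ℝ) : ℂ) - 1 = ((-(1/p) : ℝ) : ℂ) := by push_cast; ring
    rw [h1, h2, ← Complex.ofReal_cpow ht.1.le, ← Complex.ofReal_one, ← Complex.ofReal_sub,
      ← Complex.ofReal_cpow (by linarith [ht.2] : (0:ℝ) ≤ 1 - t)]
    norm_cast
  -- interval integrability of g
  have hF : IntervalIntegrable
      (fun t : ℝ => (t:ℂ) ^ ((1/p : ℝ) - 1 : ℂ) * (1 - (t:ℂ)) ^ ((1 - 1/p : ℝ) - 1 : ℂ))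
      volume 0 1 := by
    have := Complex.betaIntegral_convergent (u := ((1/p : ℝ) : ℂ)) (v := ((1 - 1/p : ℝ) : ℂ))
      (by rw [Complex.ofReal_re]; linarith) (by rw [Complex.ofReal_re]; linarith)
    simpa using this
  have gInt : IntervalIntegrable g volume 0 1 := by
    constructor
    · refine (hF.1.re).congr ?_
      refine (ae_restrict_iff' measurableSet_Ioc).mpr (ae_of_all _ fun t ht => ?_)
      have := hptwise t ht
      dsimp only
      rw [this]
      simp
    · rw [Set.Ioc_eq_empty (by norm_num)]; exact integrableOn_empty
  -- value of the beta integral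
  have hBeta : ∫ x in (0:ℝ)..1, g x = π / Real.sin (π * (1/p)) := by
    have key := Complex.Gamma_mul_Gamma_eq_betaIntegral
      (s := ((1/p : ℝ) : ℂ)) (t := ((1 - 1/p : ℝ) : ℂ))
      (by rw [Complex.ofReal_re]; linarith) (by rw [Complex.ofReal_re]; linarith)
    have hsum : ((1/p : ℝ) : ℂ) + ((1 - 1/p : ℝ) : ℂ) = 1 := by push_cast; ring
    rw [hsum, Complex.Gamma_one, one_mul] at key
    have hBval : Complex.betaIntegral ((1/p : ℝ) : ℂ) ((1 - 1/p : ℝ) : ℂ)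
        = ((∫ x in (0:ℝ)..1, g x : ℝ) : ℂ) := by
      rw [Complex.betaIntegral, ← intervalIntegral.integral_ofReal]
      refine intervalIntegral.integral_congr_ae (ae_of_all _ fun t ht => ?_)
      rw [uIoc_of_le (by norm_num : (0:ℝ) ≤ 1)] at ht
      exact hptwise t ht
    rw [hBval, Complex.Gamma_ofReal, Complex.Gamma_ofReal, ← Complex.ofReal_mul,
      Real.Gamma_mul_Gamma_one_sub] at key
    exact_mod_cast key.symm
  -- key pointwise identity
  have hkey : ∀ t : ℝ, 0 < t → (p * t ^ (p - 1)) • g (t ^ p) = p * (1 - t ^ p) ^ (-(1/p)) := by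
    intro t ht
    have h1 : (t ^ p) ^ (1/p - 1) = t ^ (1 - p) := by
      rw [← Real.rpow_mul ht.le]
      congr 1
      field_simp
    rw [smul_eq_mul, hg_def]
    dsimp only
    rw [h1]
    have h2 : t ^ (p - 1) * t ^ (1 - p) = 1 := by
      rw [← Real.rpow_add ht]; norm_num
    calc p * t ^ (p - 1) * (t ^ (1 - p) * (1 - t ^ p) ^ (-(1/p)))
        = p * (t ^ (p - 1) * t ^ (1 - p)) * (1 - t ^ p) ^ (-(1/p)) := by ring
      _ = p * (1 - t ^ p) ^ (-(1/p)) := by rw [h2]; ring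
  -- substitution t ↦ t ^ p
  have hsub : ∫ t in (0:ℝ)..1, (p * t ^ (p - 1)) • g (t ^ p) = ∫ x in (0:ℝ)..1, g x := by
    have h01 : ((0:ℝ) ⊓ 1) = 0 := by norm_num
    have h01' : ((0:ℝ) ⊔ 1) = 1 := by norm_num
    have himage : (fun t : ℝ => t ^ p) '' (Set.uIcc 0 1) ⊆ Set.Icc 0 1 := by
      rintro _ ⟨t, ht, rfl⟩
      rw [Set.uIcc_of_le (by norm_num : (0:ℝ) ≤ 1)] at ht
      exact ⟨Real.rpow_nonneg ht.1 p, Real.rpow_le_one ht.1 ht.2 hp0.le⟩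
    have hres := intervalIntegral.integral_comp_smul_deriv''' (a := 0) (b := 1)
      (f := fun t => t ^ p) (f' := fun t => p * t ^ (p - 1)) (g := g)
      (fun t _ => (Real.continuousAt_rpow_const t p (Or.inr hp0.le)).continuousWithinAt)
      (by
        intro x hx
        exact (Real.hasDerivAt_rpow_const (p := p) (Or.inr hp.le)).hasDerivWithinAt)
      (by
        rw [h01, h01']
        refine ContinuousOn.mono (s := Set.Ioo (0:ℝ) 1) ?_ ?_
        · exact ContinuousOn.mul
            (fun x hx => (Real.continuousAt_rpow_const x _
              (Or.inl (ne_of_gt hx.1))).continuousWithinAt)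
            (fun x hx => (((Real.continuousAt_rpow_const (1 - x) _
              (Or.inl (sub_ne_zero_of_ne (ne_of_lt hx.2).symm))).comp
              ((continuous_const.sub continuous_id).continuousAt))).continuousWithinAt)
        · rintro _ ⟨t, ht, rfl⟩
          exact ⟨Real.rpow_pos_of_pos ht.1 p, Real.rpow_lt_one ht.1.le ht.2 hp0⟩)
      (by
        refine IntegrableOn.mono_set ?_ himage
        refine (integrableOn_Icc_iff_integrableOn_Ioc).mpr ?_
        have := intervalIntegrable_iff.mp gInt
        rwa [uIoc_of_le (by norm_num : (0:ℝ) ≤ 1)] at this)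
      (by
        have hInt : IntegrableOn (fun t : ℝ => p * (1 - t ^ p) ^ (-(1/p))) (Set.uIcc 0 1)
            volume := by
          rw [Set.uIcc_of_le (by norm_num : (0:ℝ) ≤ 1)]
          refine (integrableOn_Icc_iff_integrableOn_Ioc).mpr ?_
          have := intervalIntegrable_iff.mp (hA.const_mul p)
          rwa [uIoc_of_le (by norm_num : (0:ℝ) ≤ 1)] at this
        refine hInt.congr ?_
        have h0 : ∀ᵐ t : ℝ, t ≠ 0 := by
          rw [MeasureTheory.ae_iff]
          simp
        filter_upwards [ae_restrict_mem measurableSet_uIcc, ae_restrict_of_ae h0] with t ht ht0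
        rw [Set.uIcc_of_le (by norm_num : (0:ℝ) ≤ 1)] at ht
        have htpos : 0 < t := lt_of_le_of_ne ht.1 (Ne.symm ht0)
        exact (hkey t htpos).symm)
    simpa [Real.zero_rpow hp0', Real.one_rpow, smul_eq_mul] using hres
  have h5 : ∫ t in (0:ℝ)..1, (p * t ^ (p - 1)) • g (t ^ p)
      = p * ∫ t in (0:ℝ)..1, (1 - t ^ p) ^ (-(1/p)) := by
    rw [← intervalIntegral.integral_const_mul]
    refine intervalIntegral.integral_congr_ae (ae_of_all _ fun t ht => ?_)
    rw [uIoc_of_le (by norm_num : (0:ℝ) ≤ 1)] at ht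
    exact hkey t ht.1
  have hfin : p * ∫ t in (0:ℝ)..1, (1 - t ^ p) ^ (-(1/p)) = π / Real.sin (π / p) := by
    rw [← h5, hsub, hBeta, mul_one_div]
  have hI : ∫ t in (0:ℝ)..1, (1 - t ^ p) ^ (-(1/p)) = π / Real.sin (π / p) / p := by
    rw [eq_div_iff hp0', mul_comm]
    exact hfin
  rw [hI]
  ring
end

section
/- If 1 < p ≤ q < ∞ and x ∈ [0, 1/2], then sin_p(π_p x) ≥ sin_q(π_q x). -/
open Real Set intervalIntegral MeasureTheory

noncomputable def fint (r t : ℝ) : ℝ := (1 - t ^ r) ^ (-(1/r))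

lemma fint_nonneg {r : ℝ} (hr : 0 ≤ r) {t : ℝ} (ht : t ∈ Icc (0:ℝ) 1) : 0 ≤ fint r t := by
  apply Real.rpow_nonneg
  have : t ^ r ≤ 1 := Real.rpow_le_one ht.1 ht.2 hr
  linarith

lemma fint_pos {r : ℝ} (hr : 0 < r) {t : ℝ} (ht : t ∈ Ico (0:ℝ) 1) : 0 < fint r t := by
  apply Real.rpow_pos_of_pos
  have : t ^ r < 1 := Real.rpow_lt_one ht.1 ht.2 hr
  linarith

lemma fint_one {r : ℝ} (hr : 0 < r) : fint r 1 = 0 := by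
  have h : -(1/r) ≠ 0 := by
    have : (0:ℝ) < 1/r := by positivity
    linarith
  unfold fint
  rw [Real.one_rpow, sub_self, Real.zero_rpow h]

lemma rpow_le_self {r t : ℝ} (hr : 1 ≤ r) (ht : t ∈ Icc (0:ℝ) 1) : t ^ r ≤ t := by
  rcases eq_or_lt_of_le ht.1 with h | h
  · rw [← h, Real.zero_rpow (by linarith)]
  · calc t ^ r ≤ t ^ (1:ℝ) := Real.rpow_le_rpow_of_exponent_ge h ht.2 hr
    _ = t := Real.rpow_one t

lemma rpow_le_rpow_exp {p q t : ℝ} (hpq : p ≤ q) (ht : t ∈ Icc (0:ℝ) 1) (hp : 0 < p) :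
    t ^ q ≤ t ^ p := by
  rcases eq_or_lt_of_le ht.1 with h | h
  · rw [← h, Real.zero_rpow (by linarith), Real.zero_rpow (by linarith)]
  · exact Real.rpow_le_rpow_of_exponent_ge h ht.2 hpq

lemma fint_measurable (r : ℝ) : Measurable (fint r) := by
  unfold fint
  fun_prop

lemma fint_integrable {r : ℝ} (hr : 1 < r) {a b : ℝ} (ha : a ∈ Icc (0:ℝ) 1)
    (hb : b ∈ Icc (0:ℝ) 1) : IntervalIntegrable (fint r) volume a b := by
  have hg : IntervalIntegrable (fun t : ℝ => (1 - t) ^ (-(1/r))) volume a b := by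
    have h1 : -1 < -(1/r) := by
      have : 1/r < 1 := by rw [div_lt_one (by linarith)]; linarith
      linarith
    have := (intervalIntegrable_rpow' (a := 1 - a) (b := 1 - b) h1).comp_sub_left 1
    simpa using this
  apply hg.mono_fun' ((fint_measurable r).aestronglyMeasurable)
  have hsub : uIoc a b ⊆ Icc (0:ℝ) 1 := by
    rw [uIoc_eq_union]
    rintro x (hx | hx)
    · exact ⟨le_trans ha.1 hx.1.le, le_trans hx.2 hb.2⟩
    · exact ⟨le_trans hb.1 hx.1.le, le_trans hx.2 ha.2⟩
  refine (ae_restrict_iff' measurableSet_uIoc).mpr (ae_of_all _ fun t ht => ?_)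
  have htm := hsub ht
  show ‖fint r t‖ ≤ (1 - t) ^ (-(1/r))
  rw [Real.norm_of_nonneg (fint_nonneg (by linarith) htm)]
  have hrr : (0:ℝ) < 1/r := by positivity
  rcases eq_or_lt_of_le htm.2 with h | h
  · rw [h, fint_one (by linarith), sub_self, Real.zero_rpow (by linarith)]
  · have h2 : t ^ r ≤ t := rpow_le_self hr.le htm
    exact Real.rpow_le_rpow_of_nonpos (by linarith) (by linarith) (by linarith)

noncomputable def Fp (p y : ℝ) : ℝ := ∫ t in (0:ℝ)..y, (1 - t ^ p) ^ (-(1/p))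

noncomputable def pip (p : ℝ) : ℝ := 2 * Fp p 1

lemma Fp_eq (p y : ℝ) : Fp p y = ∫ t in (0:ℝ)..y, fint p t := rfl

lemma Fp_strict_mono {r : ℝ} (hr : 1 < r) {a b : ℝ} (ha : 0 ≤ a) (hab : a < b)
    (hb : b ≤ 1) : Fp r a < Fp r b := by
  have hia : IntervalIntegrable (fint r) volume 0 a := fint_integrable hr ⟨le_refl 0, by linarith⟩ ⟨ha, by linarith⟩
  have hib : IntervalIntegrable (fint r) volume a b := fint_integrable hr ⟨ha, by linarith⟩ ⟨by linarith, hb⟩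
  have hsplit : Fp r a + ∫ t in a..b, fint r t = Fp r b := by
    rw [Fp_eq, Fp_eq]; exact integral_add_adjacent_intervals hia hib
  have hpos : 0 < ∫ t in a..b, fint r t := by
    apply intervalIntegral_pos_of_pos_on hib _ hab
    intro t ht
    exact fint_pos (by linarith) ⟨by linarith [ht.1], by linarith [ht.2]⟩
  linarith

lemma Fp_one_pos {r : ℝ} (hr : 1 < r) : 0 < Fp r 1 := by
  have : Fp r 0 = 0 := by rw [Fp_eq, integral_same]
  have := Fp_strict_mono hr (le_refl 0) one_pos le_rfl
  linarith

example : True := trivial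

section ratio
variable {p q : ℝ}

noncomputable def rr (p q t : ℝ) : ℝ := (1 - t ^ p) ^ (1/p) * (1 - t ^ q) ^ (-(1/q))

lemma rr_antitone (hp : 1 < p) (hpq : p ≤ q) : AntitoneOn (rr p q) (Ico (0:ℝ) 1) := by
  have hq : 1 < q := lt_of_lt_of_le hp hpq
  have hderiv : ∀ x ∈ Ioo (0:ℝ) 1, HasDerivAt (rr p q)
      (((1 - x ^ p) ^ (1/p - 1) * (1 - x ^ q) ^ (-(1/q) - 1)) *
        ((1 - x ^ p) * x ^ (q - 1) - (1 - x ^ q) * x ^ (p - 1))) x := by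
    intro x hx
    have hx0 : 0 < x := hx.1
    have hx1 : x < 1 := hx.2
    have hA : 0 < 1 - x ^ p := by
      have : x ^ p < 1 := Real.rpow_lt_one hx0.le hx1 (by linarith)
      linarith
    have hB : 0 < 1 - x ^ q := by
      have : x ^ q < 1 := Real.rpow_lt_one hx0.le hx1 (by linarith)
      linarith
    have h1 : HasDerivAt (fun t : ℝ => 1 - t ^ p) (-(p * x ^ (p - 1))) x :=
      (Real.hasDerivAt_rpow_const (Or.inl hx0.ne')).const_sub 1
    have h2 : HasDerivAt (fun t : ℝ => 1 - t ^ q) (-(q * x ^ (q - 1))) x :=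
      (Real.hasDerivAt_rpow_const (Or.inl hx0.ne')).const_sub 1
    have h3 := h1.rpow_const (p := 1/p) (Or.inl hA.ne')
    have h4 := h2.rpow_const (p := -(1/q)) (Or.inl hB.ne')
    have h5 := h3.mul h4
    refine HasDerivAt.congr_deriv (f := rr p q) h5 ?_
    symm
    have hApow : (1 - x ^ p) ^ (1/p) = (1 - x ^ p) ^ (1/p - 1) * (1 - x ^ p) := by
      rw [← Real.rpow_add_one hA.ne' (1/p - 1)]; ring_nf
    have hBpow : (1 - x ^ q) ^ (-(1/q)) = (1 - x ^ q) ^ (-(1/q) - 1) * (1 - x ^ q) := by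
      rw [← Real.rpow_add_one hB.ne' (-(1/q) - 1)]; ring_nf
    rw [hApow, hBpow]
    have hp0 : p ≠ 0 := by linarith
    have hq0 : q ≠ 0 := by linarith
    field_simp
    ring
  apply antitoneOn_of_deriv_nonpos (convex_Ico 0 1)
  · apply ContinuousOn.mul
    · apply ContinuousOn.rpow_const
      · exact (continuous_const.sub (Real.continuous_rpow_const (by linarith))).continuousOn
      · intro t ht
        right; positivity
    · apply ContinuousOn.rpow_const
      · exact (continuous_const.sub (Real.continuous_rpow_const (by linarith))).continuousOn
      · intro t ht
        left
        have : t ^ q < 1 := Real.rpow_lt_one ht.1 ht.2 (by linarith)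
        simp only [mem_Ico] at ht
        intro hcon; linarith [show (1:ℝ) - t ^ q = 0 from hcon]
  · rw [interior_Ico]
    intro x hx
    exact ((hderiv x hx).differentiableAt).differentiableWithinAt
  · rw [interior_Ico]
    intro x hx
    rw [(hderiv x hx).deriv]
    have hx0 : 0 < x := hx.1
    have hx1 : x < 1 := hx.2
    have hA : 0 < 1 - x ^ p := by
      have : x ^ p < 1 := Real.rpow_lt_one hx0.le hx1 (by linarith)
      linarith
    have hB : 0 < 1 - x ^ q := by
      have : x ^ q < 1 := Real.rpow_lt_one hx0.le hx1 (by linarith)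
      linarith
    apply mul_nonpos_of_nonneg_of_nonpos
    · positivity
    · have hxx : x ^ p * x ^ (q - 1) = x ^ q * x ^ (p - 1) := by
        rw [← Real.rpow_add hx0, ← Real.rpow_add hx0]; ring_nf
      have hle : x ^ (q - 1) ≤ x ^ (p - 1) :=
        Real.rpow_le_rpow_of_exponent_ge hx0 hx1.le (by linarith)
      nlinarith
end ratio

example : True := trivial

lemma fint_core {p q : ℝ} (hp : 1 < p) (hpq : p ≤ q) {t s : ℝ} (ht : 0 ≤ t) (hts : t ≤ s)
    (hs : s ≤ 1) : fint p t * fint q s ≤ fint q t * fint p s := by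
  have hq : 1 < q := lt_of_lt_of_le hp hpq
  rcases eq_or_lt_of_le hs with h1 | h1
  · rw [h1, fint_one (by linarith), fint_one (by linarith), mul_zero, mul_zero]
  · have htI : t ∈ Ico (0:ℝ) 1 := ⟨ht, lt_of_le_of_lt hts h1⟩
    have hsI : s ∈ Ico (0:ℝ) 1 := ⟨le_trans ht hts, h1⟩
    have hr := rr_antitone hp hpq htI hsI hts
    have hAt : 0 < 1 - t ^ p := by
      have : t ^ p < 1 := Real.rpow_lt_one htI.1 htI.2 (by linarith); linarith
    have hBt : 0 < 1 - t ^ q := by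
      have : t ^ q < 1 := Real.rpow_lt_one htI.1 htI.2 (by linarith); linarith
    have hAs : 0 < 1 - s ^ p := by
      have : s ^ p < 1 := Real.rpow_lt_one hsI.1 hsI.2 (by linarith); linarith
    have hBs : 0 < 1 - s ^ q := by
      have : s ^ q < 1 := Real.rpow_lt_one hsI.1 hsI.2 (by linarith); linarith
    set a1 := (1 - t ^ p) ^ (1/p) with ha1
    set b1 := (1 - t ^ q) ^ (1/q) with hb1
    set a2 := (1 - s ^ p) ^ (1/p) with ha2
    set b2 := (1 - s ^ q) ^ (1/q) with hb2
    have ha1p : 0 < a1 := Real.rpow_pos_of_pos hAt _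
    have hb1p : 0 < b1 := Real.rpow_pos_of_pos hBt _
    have ha2p : 0 < a2 := Real.rpow_pos_of_pos hAs _
    have hb2p : 0 < b2 := Real.rpow_pos_of_pos hBs _
    have hfpt : fint p t = a1⁻¹ := by rw [fint, ha1, ← Real.rpow_neg hAt.le]
    have hfqt : fint q t = b1⁻¹ := by rw [fint, hb1, ← Real.rpow_neg hBt.le]
    have hfps : fint p s = a2⁻¹ := by rw [fint, ha2, ← Real.rpow_neg hAs.le]
    have hfqs : fint q s = b2⁻¹ := by rw [fint, hb2, ← Real.rpow_neg hBs.le]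
    have hrt : rr p q t = a1 * b1⁻¹ := by rw [rr, ha1, hb1, ← Real.rpow_neg hBt.le]
    have hrs : rr p q s = a2 * b2⁻¹ := by rw [rr, ha2, hb2, ← Real.rpow_neg hBs.le]
    rw [hrt, hrs] at hr
    rw [hfpt, hfqt, hfps, hfqs]
    have key : b1 * a2 ≤ a1 * b2 := by
      have h2 : a2 * b2⁻¹ * (b1 * b2) ≤ a1 * b1⁻¹ * (b1 * b2) :=
        mul_le_mul_of_nonneg_right hr (by positivity)
      have e1 : a2 * b2⁻¹ * (b1 * b2) = b1 * a2 := by field_simp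
      have e2 : a1 * b1⁻¹ * (b1 * b2) = a1 * b2 := by field_simp
      rw [e1, e2] at h2; exact h2
    rw [← mul_inv, ← mul_inv]
    exact inv_anti₀ (by positivity) key

lemma Fp_key {p q : ℝ} (hp : 1 < p) (hpq : p ≤ q) {y : ℝ} (hy : y ∈ Icc (0:ℝ) 1) :
    Fp p y * Fp q 1 ≤ Fp q y * Fp p 1 := by
  have hq : 1 < q := lt_of_lt_of_le hp hpq
  have h01 : (0:ℝ) ∈ Icc (0:ℝ) 1 := ⟨le_rfl, zero_le_one⟩
  have h11 : (1:ℝ) ∈ Icc (0:ℝ) 1 := ⟨zero_le_one, le_rfl⟩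
  have hip1 : IntervalIntegrable (fint p) volume 0 y := fint_integrable hp h01 hy
  have hip2 : IntervalIntegrable (fint p) volume y 1 := fint_integrable hp hy h11
  have hiq1 : IntervalIntegrable (fint q) volume 0 y := fint_integrable hq h01 hy
  have hiq2 : IntervalIntegrable (fint q) volume y 1 := fint_integrable hq hy h11
  set Cp := ∫ s in y..(1:ℝ), fint p s with hCp
  set Cq := ∫ s in y..(1:ℝ), fint q s with hCq
  have hsp : Fp p y + Cp = Fp p 1 := by
    rw [Fp_eq, Fp_eq]; exact integral_add_adjacent_intervals hip1 hip2
  have hsq : Fp q y + Cq = Fp q 1 := by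
    rw [Fp_eq, Fp_eq]; exact integral_add_adjacent_intervals hiq1 hiq2
  have inner : ∀ t ∈ Icc (0:ℝ) y, fint p t * Cq ≤ fint q t * Cp := by
    intro t htm
    have h1 : fint p t * Cq = ∫ s in y..(1:ℝ), fint p t * fint q s := by
      rw [hCq, ← intervalIntegral.integral_const_mul]
    have h2 : fint q t * Cp = ∫ s in y..(1:ℝ), fint q t * fint p s := by
      rw [hCp, ← intervalIntegral.integral_const_mul]
    rw [h1, h2]
    apply integral_mono_on hy.2 (hiq2.const_mul _) (hip2.const_mul _)
    intro s hsm
    exact fint_core hp hpq htm.1 (le_trans htm.2 hsm.1) hsm.2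
  have outer : Fp p y * Cq ≤ Fp q y * Cp := by
    have h1 : Fp p y * Cq = ∫ t in (0:ℝ)..y, fint p t * Cq := by
      rw [Fp_eq, ← intervalIntegral.integral_mul_const]
    have h2 : Fp q y * Cp = ∫ t in (0:ℝ)..y, fint q t * Cp := by
      rw [Fp_eq, ← intervalIntegral.integral_mul_const]
    rw [h1, h2]
    exact integral_mono_on hy.1 (hip1.mul_const _) (hiq1.mul_const _) inner
  rw [← hsp, ← hsq]
  nlinarith [outer]

theorem sinp_monotone_in_p (p q : ℝ) (hp : 1 < p) (hpq : p ≤ q) (sp sq : ℝ → ℝ)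
    (hpinv₁ : ∀ y ∈ Icc (0:ℝ) 1, sp (Fp p y) = y)
    (hpinv₂ : ∀ x ∈ Icc (0:ℝ) (pip p / 2), Fp p (sp x) = x)
    (hqinv₁ : ∀ y ∈ Icc (0:ℝ) 1, sq (Fp q y) = y)
    (hqinv₂ : ∀ x ∈ Icc (0:ℝ) (pip q / 2), Fp q (sq x) = x)
    (x : ℝ) (hx : x ∈ Icc (0:ℝ) (1/2)) :
    sq (pip q * x) ≤ sp (pip p * x) := by
  have hq : 1 < q := lt_of_lt_of_le hp hpq
  -- surjectivity via IVT
  have hsurj : ∀ r : ℝ, 1 < r → ∃ y ∈ Icc (0:ℝ) 1, Fp r y = pip r * x := by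
    intro r hr
    have hcont : ContinuousOn (Fp r) (Icc (0:ℝ) 1) := by
      have hint : IntegrableOn (fint r) (uIcc (0:ℝ) 1) volume := by
        rw [uIcc_of_le zero_le_one, ←
          intervalIntegrable_iff_integrableOn_Icc_of_le zero_le_one]
        exact fint_integrable hr ⟨le_rfl, zero_le_one⟩ ⟨zero_le_one, le_rfl⟩
      have := intervalIntegral.continuousOn_primitive_interval hint
      rw [uIcc_of_le zero_le_one] at this
      exact this
    have h0 : Fp r 0 = 0 := by rw [Fp_eq, integral_same]
    have h1 : 0 < Fp r 1 := Fp_one_pos hr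
    have hmem : pip r * x ∈ Icc (Fp r 0) (Fp r 1) := by
      rw [h0, pip]
      constructor
      · have := hx.1; positivity
      · nlinarith [hx.2, hx.1]
    obtain ⟨y, hy, hFy⟩ := intermediate_value_Icc zero_le_one hcont hmem
    exact ⟨y, hy, hFy⟩
  obtain ⟨y1, hy1, hFy1⟩ := hsurj p hp
  obtain ⟨y2, hy2, hFy2⟩ := hsurj q hq
  rw [← hFy1, ← hFy2, hpinv₁ y1 hy1, hqinv₁ y2 hy2]
  by_contra hcon
  push_neg at hcon
  have hstrict : Fp q y1 < Fp q y2 := Fp_strict_mono hq hy1.1 hcon hy2.2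
  have hkey := Fp_key hp hpq hy1
  have hp1 : 0 < Fp p 1 := Fp_one_pos hp
  have hq1 : 0 < Fp q 1 := Fp_one_pos hq
  rw [hFy1] at hkey
  rw [hFy2] at hstrict
  have hmul : Fp q y1 * Fp p 1 < pip q * x * Fp p 1 :=
    mul_lt_mul_of_pos_right hstrict hp1
  have e1 : pip p = 2 * Fp p 1 := rfl
  have e2 : pip q = 2 * Fp q 1 := rfl
  rw [e1] at hkey
  rw [e2] at hmul
  nlinarith [hkey, hmul]
end

section
/- Let p > 2, p' = p/(p-1), and v_p(x) := (p'-1) sin_{p'}(π_{p'} x)^{p'-2} cos_{p'}(π_{p'} x) for x ∈ (0, 1/2]. Then v_p is strictly decreasing on (0, 1/2], lim_{x→0⁺} x·v_p(x) = 0, lim_{x→0⁺} v_p(x) = +∞, and v_p(1/2) = 0. -/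
open Real Set Filter

namespace VpAux

open MeasureTheory intervalIntegral Topology

/-- The integrand. -/
noncomputable def gq (q t : ℝ) : ℝ := (1 - t ^ q) ^ (-(1/q))

variable {q : ℝ}

lemma rpow_self_le (hq : 1 ≤ q) {t : ℝ} (ht : 0 ≤ t) (ht1 : t ≤ 1) : t ^ q ≤ t := by
  rcases eq_or_lt_of_le ht with h | h
  · rw [← h, Real.zero_rpow (by positivity)]
  · calc t ^ q ≤ t ^ (1:ℝ) :=
        Real.rpow_le_rpow_of_exponent_ge h ht1 hq
    _ = t := Real.rpow_one t

lemma base_pos (hq : 0 < q) {t : ℝ} (ht : 0 ≤ t) (ht1 : t < 1) : 0 < 1 - t ^ q := by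
  rcases eq_or_lt_of_le ht with h | h
  · rw [← h, Real.zero_rpow (ne_of_gt hq)]; norm_num
  · have : t ^ q < 1 := Real.rpow_lt_one ht ht1 hq
    linarith

lemma gq_pos (hq : 0 < q) {t : ℝ} (ht : 0 ≤ t) (ht1 : t < 1) : 0 < gq q t :=
  Real.rpow_pos_of_pos (base_pos hq ht ht1) _

lemma gq_nonneg (hq : 0 < q) {t : ℝ} (ht : 0 ≤ t) (ht1 : t ≤ 1) : 0 ≤ gq q t := by
  rcases eq_or_lt_of_le ht1 with h | h
  · subst h
    have h0 : -(1/q) ≠ 0 := ne_of_lt (neg_neg_of_pos (one_div_pos.mpr hq))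
    rw [gq, Real.one_rpow, sub_self, Real.zero_rpow h0]
  · exact (gq_pos hq ht h).le

lemma gq_mono (hq : 0 < q) {s t : ℝ} (hs : 0 ≤ s) (hst : s ≤ t) (ht1 : t < 1) :
    gq q s ≤ gq q t := by
  have h1 : 0 < 1 - t ^ q := base_pos hq (hs.trans hst) ht1
  have h2 : 1 - t ^ q ≤ 1 - s ^ q := by
    have : s ^ q ≤ t ^ q := Real.rpow_le_rpow hs hst hq.le
    linarith
  exact Real.rpow_le_rpow_of_nonpos h1 h2 (neg_nonpos.mpr (by positivity))

lemma gq_contAt (hq : 0 < q) {t : ℝ} (ht : 0 < t) (ht1 : t < 1) :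
    ContinuousAt (gq q) t := by
  have h1 : ContinuousAt (fun s : ℝ => s ^ q) t :=
    Real.continuousAt_rpow_const t q (Or.inl (ne_of_gt ht))
  have h2 : ContinuousAt (fun s : ℝ => 1 - s ^ q) t := continuousAt_const.sub h1
  exact h2.rpow_const (Or.inl (ne_of_gt (base_pos hq ht.le ht1)))

lemma gq_contOn (hq : 0 < q) : ContinuousOn (gq q) (Ioo 0 1) := fun t ht =>
  ((gq_contAt hq ht.1 ht.2).continuousWithinAt)

lemma gq_intble (hq1 : 1 < q) (hq2 : q < 2) {a b : ℝ} (ha : a ∈ Icc (0:ℝ) 1)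
    (hb : b ∈ Icc (0:ℝ) 1) : IntervalIntegrable (gq q) volume a b := by
  have hq : 0 < q := by linarith
  have hr : (-1:ℝ) < -(1/q) := by
    have : 1/q < 1 := by rw [div_lt_one hq]; linarith
    linarith
  have h1 : IntervalIntegrable (fun t : ℝ => (1 - t) ^ (-(1/q))) volume 0 1 := by
    have h := (intervalIntegrable_rpow' (a := (0:ℝ)) (b := (1:ℝ)) hr).comp_sub_left 1
    norm_num at h
    simpa [one_div] using h.symm
  have hmain : IntervalIntegrable (gq q) volume 0 1 := by
    apply h1.mono_fun'
    · have hI : Set.uIoc (0:ℝ) 1 = Ioc 0 1 := uIoc_of_le zero_le_one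
      rw [hI, ← MeasureTheory.Measure.restrict_congr_set Ioo_ae_eq_Ioc]
      exact (gq_contOn hq).aestronglyMeasurable measurableSet_Ioo
    · rw [uIoc_of_le zero_le_one]
      refine MeasureTheory.ae_restrict_of_forall_mem measurableSet_Ioc ?_
      intro t ht
      have hnorm : ‖gq q t‖ = gq q t := Real.norm_of_nonneg (gq_nonneg hq ht.1.le ht.2)
      show ‖gq q t‖ ≤ (1 - t) ^ (-(1/q))
      rw [hnorm]
      rcases eq_or_lt_of_le ht.2 with h | h
      · subst h
        have h0 : -(1/q) ≠ 0 := ne_of_lt (neg_neg_of_pos (one_div_pos.mpr hq))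
        rw [gq, Real.one_rpow, sub_self, Real.zero_rpow h0]
      · have hb1 : 0 < 1 - t := by linarith
        have hb2 : 1 - t ≤ 1 - t ^ q := by
          have := rpow_self_le hq1.le ht.1.le h.le
          linarith
        exact Real.rpow_le_rpow_of_nonpos hb1 hb2
          (neg_nonpos.mpr (by positivity))
  refine hmain.mono_set ?_
  rw [Set.uIcc_subset_uIcc_iff_mem, uIcc_of_le (zero_le_one : (0:ℝ) ≤ 1)]
  exact ⟨ha, hb⟩

lemma Fp_eq (y : ℝ) : Fp q y = ∫ t in (0:ℝ)..y, gq q t := rfl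

lemma Fp_zero : Fp q 0 = 0 := intervalIntegral.integral_same

lemma Fp_strictMono (hq1 : 1 < q) (hq2 : q < 2) :
    StrictMonoOn (Fp q) (Icc (0:ℝ) 1) := by
  have hq : 0 < q := by linarith
  intro a ha b hb hab
  have hint : IntervalIntegrable (gq q) volume a b := gq_intble hq1 hq2 ha hb
  have h0a : IntervalIntegrable (gq q) volume 0 a :=
    gq_intble hq1 hq2 ⟨le_rfl, zero_le_one⟩ ha
  have key : 0 < ∫ t in a..b, gq q t :=
    intervalIntegral.intervalIntegral_pos_of_pos_on hint
      (fun t ht => gq_pos hq (le_trans ha.1 ht.1.le) (lt_of_lt_of_le ht.2 hb.2)) hab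
  have hadd : (∫ t in (0:ℝ)..a, gq q t) + ∫ t in a..b, gq q t = ∫ t in (0:ℝ)..b, gq q t :=
    intervalIntegral.integral_add_adjacent_intervals h0a hint
  rw [Fp_eq, Fp_eq]
  linarith

lemma Fp_contOn (hq1 : 1 < q) (hq2 : q < 2) : ContinuousOn (Fp q) (Icc (0:ℝ) 1) := by
  have h : IntegrableOn (gq q) (Icc (0:ℝ) 1) volume := by
    rw [← intervalIntegrable_iff_integrableOn_Icc_of_le zero_le_one]
    exact gq_intble hq1 hq2 ⟨le_rfl, zero_le_one⟩ ⟨zero_le_one, le_rfl⟩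
  have := intervalIntegral.continuousOn_primitive_interval
    (a := (0:ℝ)) (b := 1) (μ := volume) (f := gq q) (by rwa [uIcc_of_le zero_le_one])
  rwa [uIcc_of_le zero_le_one] at this

lemma Fp_hasDeriv (hq1 : 1 < q) (hq2 : q < 2) {y : ℝ} (hy : y ∈ Ioo (0:ℝ) 1) :
    HasDerivAt (Fp q) (gq q y) y := by
  have hq : 0 < q := by linarith
  have hint : IntervalIntegrable (gq q) volume 0 y :=
    gq_intble hq1 hq2 ⟨le_rfl, zero_le_one⟩ ⟨hy.1.le, hy.2.le⟩
  have hmeas : StronglyMeasurableAtFilter (gq q) (𝓝 y) volume :=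
    ⟨Ioo 0 1, Ioo_mem_nhds hy.1 hy.2,
      (gq_contOn hq).aestronglyMeasurable measurableSet_Ioo⟩
  exact intervalIntegral.integral_hasDerivAt_right hint hmeas (gq_contAt hq hy.1 hy.2)

lemma Fp_pos (hq1 : 1 < q) (hq2 : q < 2) : 0 < Fp q 1 := by
  have hq : 0 < q := by linarith
  exact intervalIntegral.intervalIntegral_pos_of_pos_on
    (gq_intble hq1 hq2 ⟨le_rfl, zero_le_one⟩ ⟨zero_le_one, le_rfl⟩)
    (fun t ht => gq_pos hq ht.1.le ht.2) one_pos

/-- Lower bound on the tail integral. -/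
lemma Fp_tail_lb (hq1 : 1 < q) (hq2 : q < 2) {s : ℝ} (hs : 0 ≤ s) (hs1 : s < 1) :
    (1 - s) * (1 - s ^ q) ^ (-(1/q)) ≤ Fp q 1 - Fp q s := by
  have hq : 0 < q := by linarith
  have hint : IntervalIntegrable (gq q) volume s 1 :=
    gq_intble hq1 hq2 ⟨hs, hs1.le⟩ ⟨zero_le_one, le_rfl⟩
  have h0s : IntervalIntegrable (gq q) volume 0 s :=
    gq_intble hq1 hq2 ⟨le_rfl, zero_le_one⟩ ⟨hs, hs1.le⟩
  have hadd : (∫ t in (0:ℝ)..s, gq q t) + ∫ t in s..1, gq q t = ∫ t in (0:ℝ)..1, gq q t :=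
    intervalIntegral.integral_add_adjacent_intervals h0s hint
  have hne : ∀ᵐ t : ℝ ∂volume, t ≠ 1 := by
    simp [ae_iff, Real.volume_singleton]
  have hae : ∀ᵐ t ∂(volume.restrict (Icc s 1)), gq q s ≤ gq q t := by
    filter_upwards [MeasureTheory.ae_restrict_mem measurableSet_Icc,
      MeasureTheory.ae_restrict_of_ae hne] with t ht ht1
    exact gq_mono hq hs ht.1 (lt_of_le_of_ne ht.2 ht1)
  have hmono : (∫ _ in s..1, gq q s) ≤ ∫ t in s..1, gq q t :=
    intervalIntegral.integral_mono_ae_restrict hs1.le intervalIntegrable_const hint hae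
  have hconst : (∫ _ in s..1, gq q s) = (1 - s) * gq q s := by
    simp [intervalIntegral.integral_const, smul_eq_mul]
  rw [Fp_eq, Fp_eq]
  have h2 : (1 - s) * gq q s ≤ ∫ t in s..1, gq q t := by rw [← hconst]; exact hmono
  rw [show (1 - s ^ q) ^ (-(1/q)) = gq q s from rfl]
  linarith

/-- Upper bound near zero. -/
lemma Fp_head_ub (hq1 : 1 < q) (hq2 : q < 2) {s : ℝ} (hs : 0 ≤ s) (hs1 : s < 1) :
    Fp q s ≤ s * (1 - s ^ q) ^ (-(1/q)) := by
  have hq : 0 < q := by linarith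
  have hint : IntervalIntegrable (gq q) volume 0 s :=
    gq_intble hq1 hq2 ⟨le_rfl, zero_le_one⟩ ⟨hs, hs1.le⟩
  have hmono : (∫ t in (0:ℝ)..s, gq q t) ≤ ∫ _ in (0:ℝ)..s, gq q s :=
    intervalIntegral.integral_mono_on hs hint intervalIntegrable_const
      (fun t ht => gq_mono hq ht.1 ht.2 hs1)
  have hconst : (∫ _ in (0:ℝ)..s, gq q s) = s * gq q s := by
    simp [intervalIntegral.integral_const, smul_eq_mul]
  rw [Fp_eq]
  calc (∫ t in (0:ℝ)..s, gq q t) ≤ s * gq q s := by rw [← hconst]; exact hmono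
  _ = s * (1 - s ^ q) ^ (-(1/q)) := rfl

end VpAux

theorem vp_properties (p : ℝ) (hp : 2 < p) (sc : ℝ → ℝ)
    (hinv₁ : ∀ y ∈ Icc (0:ℝ) 1, sc (Fp (p / (p - 1)) y) = y)
    (hinv₂ : ∀ x ∈ Icc (0:ℝ) (pip (p / (p - 1)) / 2), Fp (p / (p - 1)) (sc x) = x)
    (v : ℝ → ℝ)
    (hv : ∀ x, v x = (p / (p - 1) - 1) * sc (pip (p / (p - 1)) * x) ^ (p / (p - 1) - 2) *
      deriv sc (pip (p / (p - 1)) * x)) :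
    StrictAntiOn v (Ioc (0:ℝ) (1/2)) ∧
    Tendsto (fun x => x * v x) (nhdsWithin 0 (Ioi 0)) (nhds 0) ∧
    Tendsto v (nhdsWithin 0 (Ioi 0)) atTop ∧
    v (1/2) = 0 := by
  have hp1 : (0:ℝ) < p - 1 := by linarith
  set q : ℝ := p / (p - 1) with hqdef
  have hq1 : 1 < q := by
    rw [hqdef, lt_div_iff₀ hp1]; linarith
  have hq2 : q < 2 := by
    rw [hqdef, div_lt_iff₀ hp1]; linarith
  have hq : 0 < q := by linarith
  set c : ℝ := pip q / 2 with hcdef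
  have hcF : c = Fp q 1 := by rw [hcdef, pip]; ring
  have hc : 0 < c := by rw [hcF]; exact VpAux.Fp_pos hq1 hq2
  have hπ : pip q = 2 * c := by rw [hcdef]; ring
  have hsc0 : sc 0 = 0 := by
    have h := hinv₁ 0 ⟨le_rfl, zero_le_one⟩
    rwa [VpAux.Fp_zero] at h
  have hscc : sc c = 1 := by
    have h := hinv₁ 1 ⟨zero_le_one, le_rfl⟩
    rwa [← hcF] at h
  have hFmono := VpAux.Fp_strictMono (q := q) hq1 hq2
  have hFcont := VpAux.Fp_contOn (q := q) hq1 hq2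
  have hmem : ∀ x ∈ Icc (0:ℝ) c, sc x ∈ Icc (0:ℝ) 1 := by
    intro x hx
    have h := intermediate_value_Icc zero_le_one hFcont
    have hx' : x ∈ Icc (Fp q 0) (Fp q 1) := by
      rw [VpAux.Fp_zero, ← hcF]; exact hx
    obtain ⟨y, hy, hyx⟩ := h hx'
    rw [← hyx, hinv₁ y hy]; exact hy
  have hscMono : StrictMonoOn sc (Icc (0:ℝ) c) := by
    intro x hx y hy hxy
    by_contra hcon
    push_neg at hcon
    have h1 : Fp q (sc y) ≤ Fp q (sc x) := by
      rcases eq_or_lt_of_le hcon with h | h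
      · rw [h]
      · exact (hFmono (hmem y hy) (hmem x hx) h).le
    rw [hinv₂ x hx, hinv₂ y hy] at h1
    linarith
  have hmemOpen : ∀ x ∈ Ioo (0:ℝ) c, sc x ∈ Ioo (0:ℝ) 1 := by
    intro x hx
    constructor
    · have h := hscMono ⟨le_rfl, hc.le⟩ ⟨hx.1.le, hx.2.le⟩ hx.1
      rwa [hsc0] at h
    · have h := hscMono ⟨hx.1.le, hx.2.le⟩ ⟨hc.le, le_rfl⟩ hx.2
      rwa [hscc] at h
  have hFmem : ∀ y ∈ Icc (0:ℝ) 1, Fp q y ∈ Icc (0:ℝ) c := by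
    intro y hy
    constructor
    · rw [← VpAux.Fp_zero (q := q)]
      exact hFmono.monotoneOn ⟨le_rfl, zero_le_one⟩ hy hy.1
    · rw [hcF]
      exact hFmono.monotoneOn hy ⟨zero_le_one, le_rfl⟩ hy.2
  have himage : Icc (0:ℝ) 1 ⊆ sc '' Icc 0 c := by
    intro y hy
    exact ⟨Fp q y, hFmem y hy, hinv₁ y hy⟩
  have hscContAt : ∀ x ∈ Ioo (0:ℝ) c, ContinuousAt sc x := by
    intro x hx
    refine hscMono.continuousAt_of_image_mem_nhds (Icc_mem_nhds hx.1 hx.2) ?_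
    exact Filter.mem_of_superset
      (Icc_mem_nhds (hmemOpen x hx).1 (hmemOpen x hx).2) himage
  have hscDeriv : ∀ x ∈ Ioo (0:ℝ) c,
      HasDerivAt sc ((1 - (sc x) ^ q) ^ (1/q)) x := by
    intro x hx
    have hsx := hmemOpen x hx
    have hF := VpAux.Fp_hasDeriv (q := q) hq1 hq2 hsx
    have hne : VpAux.gq q (sc x) ≠ 0 := ne_of_gt (VpAux.gq_pos hq hsx.1.le hsx.2)
    have hev : ∀ᶠ y in nhds x, Fp q (sc y) = y := by
      filter_upwards [Icc_mem_nhds hx.1 hx.2] with y hy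
      exact hinv₂ y hy
    have h := HasDerivAt.of_local_left_inverse (hscContAt x hx) hF hne hev
    refine h.congr_deriv ?_
    rw [show VpAux.gq q (sc x) = (1 - sc x ^ q) ^ (-(1/q)) from rfl, Real.rpow_neg (VpAux.base_pos hq hsx.1.le hsx.2).le, inv_inv]
  have hmem2 : ∀ x ∈ Ioo (0:ℝ) (1/2), 2*c*x ∈ Ioo (0:ℝ) c := by
    intro x hx
    constructor
    · have := hx.1; positivity
    · nlinarith [hx.2]
  have hsInt : ∀ x ∈ Ioo (0:ℝ) (1/2), sc (2*c*x) ∈ Ioo (0:ℝ) 1 :=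
    fun x hx => hmemOpen _ (hmem2 x hx)
  have hvEq : ∀ x ∈ Ioo (0:ℝ) (1/2),
      v x = (q - 1) * (sc (2*c*x)) ^ (q-2) * (1 - (sc (2*c*x)) ^ q) ^ (1/q) := by
    intro x hx
    rw [hv x, hπ]
    rw [(hscDeriv _ (hmem2 x hx)).deriv]
  -- left continuity of sc at c and the derivative at c
  have hleft : ContinuousWithinAt sc (Iic c) c := by
    refine hscMono.continuousWithinAt_left_of_exists_between
      (Icc_mem_nhdsLE_of_mem ⟨hc, le_rfl⟩) ?_
    intro b hb
    rw [hscc] at hb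
    refine ⟨Fp q (max b 0), hFmem _ ⟨le_max_right _ _, ?_⟩, ?_⟩
    · exact max_le hb.le zero_le_one
    · rw [hinv₁ (max b 0) ⟨le_max_right _ _, max_le hb.le zero_le_one⟩, hscc]
      exact ⟨le_max_left _ _, max_lt hb one_pos⟩
  have hslope : Tendsto (fun y => (sc y - sc c) / (y - c)) (nhdsWithin c (Iio c)) (nhds 0) := by
    have hsc1 : Tendsto sc (nhdsWithin c (Iio c)) (nhds 1) := by
      have h := hleft.tendsto
      rw [hscc] at h
      exact h.mono_left (nhdsWithin_mono c Iio_subset_Iic_self)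
    have hbound : Tendsto (fun y => (1 - (sc y)^q) ^ (1/q)) (nhdsWithin c (Iio c)) (nhds 0) := by
      have hcont : ContinuousAt (fun s : ℝ => (1 - s^q) ^ (1/q)) 1 := by
        have h1 : ContinuousAt (fun s : ℝ => s ^ q) 1 :=
          Real.continuousAt_rpow_const 1 q (Or.inl one_ne_zero)
        exact (continuousAt_const.sub h1).rpow_const (Or.inr (by positivity))
      have hval : (1 - (1:ℝ)^q) ^ (1/q) = 0 := by
        rw [Real.one_rpow, sub_self, Real.zero_rpow (by positivity)]
      have h := hcont.tendsto.comp hsc1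
      rwa [hval] at h
    apply squeeze_zero' ?_ ?_ hbound
    · filter_upwards [Ioo_mem_nhdsLT_of_mem (⟨hc, le_rfl⟩ : c ∈ Ioc 0 c)] with y hy
      have hsy := hmemOpen y hy
      rw [hscc]
      have heq : (sc y - 1)/(y - c) = (1 - sc y)/(c - y) := by
        rw [← neg_div_neg_eq]; ring_nf
      rw [heq]
      exact div_nonneg (by linarith [hsy.2]) (by linarith [hy.2])
    · filter_upwards [Ioo_mem_nhdsLT_of_mem (⟨hc, le_rfl⟩ : c ∈ Ioc 0 c)] with y hy
      have hsy := hmemOpen y hy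
      have htail := VpAux.Fp_tail_lb (q := q) hq1 hq2 hsy.1.le hsy.2
      rw [hinv₂ y ⟨hy.1.le, hy.2.le⟩, ← hcF] at htail
      have hbase := VpAux.base_pos hq hsy.1.le hsy.2
      have hB : 0 < (1 - (sc y)^q)^(1/q) := Real.rpow_pos_of_pos hbase _
      have hcy : 0 < c - y := by linarith [hy.2]
      have hBC : (1 - (sc y)^q)^(-(1/q)) = ((1 - (sc y)^q)^(1/q))⁻¹ :=
        Real.rpow_neg hbase.le _
      rw [hBC] at htail
      have h1 : (1 - sc y) ≤ ((1 - (sc y)^q)^(1/q)) * (c - y) := by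
        calc 1 - sc y
            = ((1 - (sc y)^q)^(1/q)) * ((1 - sc y) * ((1 - (sc y)^q)^(1/q))⁻¹) := by
              field_simp
          _ ≤ ((1 - (sc y)^q)^(1/q)) * (c - y) :=
              mul_le_mul_of_nonneg_left htail hB.le
      have heq : (sc y - sc c) / (y - c) = (1 - sc y) / (c - y) := by
        rw [hscc, ← neg_div_neg_eq]
        ring_nf
      rw [heq, div_le_iff₀ hcy]
      exact h1
  have hderivc : deriv sc c = 0 := by
    by_cases hd : DifferentiableAt ℝ sc c
    · have hIio : Iio c \ {c} = Iio c := by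
        apply Set.diff_singleton_eq_self
        simp
      have h2 := (hd.hasDerivAt.hasDerivWithinAt (s := Iio c))
      rw [hasDerivWithinAt_iff_tendsto_slope, hIio] at h2
      have h3 : Tendsto (slope sc c) (nhdsWithin c (Iio c)) (nhds 0) := by
        apply hslope.congr
        intro y
        rw [slope_def_field]
      exact tendsto_nhds_unique h2 h3
    · exact deriv_zero_of_not_differentiableAt hd
  have hv12 : v (1/2) = 0 := by
    have hpc : pip q * (1/2) = c := by rw [hπ]; ring
    rw [hv, hpc, hderivc, mul_zero]
  -- strict antitonicity
  have hφanti : ∀ s₁ s₂ : ℝ, s₁ ∈ Ioo (0:ℝ) 1 → s₂ ∈ Ioo (0:ℝ) 1 → s₁ < s₂ →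
      (q-1) * s₂^(q-2) * (1 - s₂^q)^(1/q) < (q-1) * s₁^(q-2) * (1 - s₁^q)^(1/q) := by
    intro s₁ s₂ h₁ h₂ h12
    have ha : s₂^(q-2) < s₁^(q-2) :=
      Real.rpow_lt_rpow_of_neg h₁.1 h12 (by linarith)
    have hb : (1 - s₂^q)^(1/q) ≤ (1 - s₁^q)^(1/q) := by
      apply Real.rpow_le_rpow (VpAux.base_pos hq h₂.1.le h₂.2).le ?_ (by positivity)
      have h := Real.rpow_le_rpow h₁.1.le h12.le hq.le
      linarith
    have hbpos : 0 < (1 - s₂^q)^(1/q) :=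
      Real.rpow_pos_of_pos (VpAux.base_pos hq h₂.1.le h₂.2) _
    have hapos : 0 < s₁ ^ (q-2) := Real.rpow_pos_of_pos h₁.1 _
    have hq1' : (0:ℝ) < q - 1 := by linarith
    calc (q-1) * s₂^(q-2) * (1 - s₂^q)^(1/q)
        < (q-1) * s₁^(q-2) * (1 - s₂^q)^(1/q) :=
          mul_lt_mul_of_pos_right (mul_lt_mul_of_pos_left ha hq1') hbpos
      _ ≤ (q-1) * s₁^(q-2) * (1 - s₁^q)^(1/q) :=
          mul_le_mul_of_nonneg_left hb (mul_nonneg hq1'.le hapos.le)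
  have hvpos : ∀ x ∈ Ioo (0:ℝ) (1/2), 0 < v x := by
    intro x hx
    rw [hvEq x hx]
    have hs := hsInt x hx
    have h1 : 0 < (sc (2*c*x)) ^ (q-2) := Real.rpow_pos_of_pos hs.1 _
    have h2 : 0 < (1 - (sc (2*c*x))^q)^(1/q) :=
      Real.rpow_pos_of_pos (VpAux.base_pos hq hs.1.le hs.2) _
    have hq1' : (0:ℝ) < q - 1 := by linarith
    positivity
  have hanti : StrictAntiOn v (Ioc (0:ℝ) (1/2)) := by
    intro x₁ hx₁ x₂ hx₂ h12
    rcases eq_or_lt_of_le hx₂.2 with h | h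
    · have hx1o : x₁ ∈ Ioo (0:ℝ) (1/2) := ⟨hx₁.1, by rw [← h]; exact h12⟩
      rw [h, hv12]
      exact hvpos x₁ hx1o
    · have hx1o : x₁ ∈ Ioo (0:ℝ) (1/2) := ⟨hx₁.1, h12.trans h⟩
      have hx2o : x₂ ∈ Ioo (0:ℝ) (1/2) := ⟨hx₂.1, h⟩
      rw [hvEq x₁ hx1o, hvEq x₂ hx2o]
      apply hφanti _ _ (hsInt x₁ hx1o) (hsInt x₂ hx2o)
      exact hscMono ⟨(hmem2 _ hx1o).1.le, (hmem2 _ hx1o).2.le⟩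
        ⟨(hmem2 _ hx2o).1.le, (hmem2 _ hx2o).2.le⟩ (by nlinarith)
  -- behaviour of sc (2*c*x) as x → 0⁺
  have hrightCont : ContinuousWithinAt sc (Ici 0) 0 := by
    refine hscMono.continuousWithinAt_right_of_exists_between
      (Icc_mem_nhdsGE_of_mem ⟨le_rfl, hc⟩) ?_
    intro b hb
    rw [hsc0] at hb
    have hmb : min b 1 ∈ Icc (0:ℝ) 1 :=
      ⟨le_min hb.le zero_le_one, min_le_right _ _⟩
    refine ⟨Fp q (min b 1), hFmem _ hmb, ?_⟩
    rw [hinv₁ (min b 1) hmb, hsc0]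
    exact ⟨lt_min hb one_pos, min_le_left _ _⟩
  have h2c : Tendsto (fun x : ℝ => 2*c*x) (nhdsWithin 0 (Ioi 0)) (nhdsWithin 0 (Ioi 0)) := by
    rw [tendsto_nhdsWithin_iff]
    constructor
    · have hcont : Continuous (fun x : ℝ => 2*c*x) := continuous_const.mul continuous_id
      have h := hcont.tendsto' 0 0 (by norm_num)
      exact h.mono_left nhdsWithin_le_nhds
    · filter_upwards [eventually_mem_nhdsWithin] with x hx
      have hx' : (0:ℝ) < x := hx
      exact mul_pos (by linarith) hx'
  have hs0 : Tendsto (fun x => sc (2*c*x)) (nhdsWithin 0 (Ioi 0)) (nhdsWithin 0 (Ioi 0)) := by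
    rw [tendsto_nhdsWithin_iff]
    constructor
    · have h := hrightCont.tendsto
      rw [hsc0] at h
      exact (h.mono_left (nhdsWithin_mono 0 Ioi_subset_Ici_self)).comp h2c
    · filter_upwards [Ioo_mem_nhdsGT_of_mem
        (⟨le_rfl, one_half_pos⟩ : (0:ℝ) ∈ Ico 0 (1/2))] with x hx
      exact (hsInt x hx).1
  -- v → ∞
  have hφtop : Tendsto (fun s : ℝ => (q-1) * s^(q-2) * (1-s^q)^(1/q))
      (nhdsWithin 0 (Ioi 0)) atTop := by
    have h1 : Tendsto (fun s : ℝ => s^(q-2)) (nhdsWithin 0 (Ioi 0)) atTop := by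
      have h2 : Tendsto (fun s : ℝ => s^(2-q)) (nhdsWithin 0 (Ioi 0))
          (nhdsWithin 0 (Ioi 0)) := by
        rw [tendsto_nhdsWithin_iff]
        constructor
        · have hcA : ContinuousAt (fun s : ℝ => s^(2-q)) 0 :=
            Real.continuousAt_rpow_const 0 (2-q) (Or.inr (by linarith))
          have h := hcA.tendsto.mono_left (nhdsWithin_le_nhds (s := Ioi (0:ℝ)))
          rwa [Real.zero_rpow (by linarith : 2 - q ≠ 0)] at h
        · filter_upwards [eventually_mem_nhdsWithin] with s hs
          exact Real.rpow_pos_of_pos hs _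
      have h3 := tendsto_inv_nhdsGT_zero.comp h2
      apply h3.congr'
      filter_upwards [eventually_mem_nhdsWithin] with s hs
      have hs' : (0:ℝ) < s := hs
      simp only [Function.comp_apply]
      rw [← Real.rpow_neg hs'.le, neg_sub]
    have h3 : Tendsto (fun s : ℝ => (q-1) * (1-s^q)^(1/q))
        (nhdsWithin 0 (Ioi 0)) (nhds (q-1)) := by
      have hcA : ContinuousAt (fun s : ℝ => (1-s^q)^(1/q)) 0 := by
        have hb : ContinuousAt (fun s : ℝ => s ^ q) 0 :=
          Real.continuousAt_rpow_const 0 q (Or.inr hq.le)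
        exact (continuousAt_const.sub hb).rpow_const (Or.inr (by positivity))
      have hval : (1 - (0:ℝ)^q)^(1/q) = 1 := by
        rw [Real.zero_rpow (ne_of_gt hq), sub_zero, Real.one_rpow]
      have h := (hcA.tendsto.mono_left (nhdsWithin_le_nhds (s := Ioi (0:ℝ)))).const_mul (q-1)
      rw [hval, mul_one] at h
      exact h
    have h4 := h1.atTop_mul_pos (by linarith : (0:ℝ) < q - 1) h3
    apply h4.congr
    intro s
    ring
  have hvTop : Tendsto v (nhdsWithin 0 (Ioi 0)) atTop := by
    apply (hφtop.comp hs0).congr'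
    filter_upwards [Ioo_mem_nhdsGT_of_mem
      (⟨le_rfl, one_half_pos⟩ : (0:ℝ) ∈ Ico 0 (1/2))] with x hx
    rw [Function.comp_apply, ← hvEq x hx]
  -- x * v x → 0
  have hxv : Tendsto (fun x => x * v x) (nhdsWithin 0 (Ioi 0)) (nhds 0) := by
    have hub : Tendsto (fun x => ((q-1)/(2*c)) * (sc (2*c*x))^(q-1))
        (nhdsWithin 0 (Ioi 0)) (nhds 0) := by
      have hA : ContinuousAt (fun s : ℝ => s^(q-1)) 0 :=
        Real.continuousAt_rpow_const 0 (q-1) (Or.inr (by linarith))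
      have h0 : Tendsto (fun s : ℝ => s^(q-1)) (nhdsWithin 0 (Ioi 0)) (nhds 0) := by
        have h := hA.tendsto.mono_left (nhdsWithin_le_nhds (s := Ioi (0:ℝ)))
        rwa [Real.zero_rpow (by intro hcon; exact absurd hcon (by linarith))] at h
      have h := (h0.comp hs0).const_mul ((q-1)/(2*c))
      rw [mul_zero] at h
      exact h
    apply squeeze_zero' ?_ ?_ hub
    · filter_upwards [Ioo_mem_nhdsGT_of_mem
        (⟨le_rfl, one_half_pos⟩ : (0:ℝ) ∈ Ico 0 (1/2))] with x hx
      exact mul_nonneg hx.1.le (hvpos x hx).le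
    · filter_upwards [Ioo_mem_nhdsGT_of_mem
        (⟨le_rfl, one_half_pos⟩ : (0:ℝ) ∈ Ico 0 (1/2))] with x hx
      have hsmem := hsInt x hx
      have hbase := VpAux.base_pos hq hsmem.1.le hsmem.2
      have hB : 0 < (1 - (sc (2*c*x))^q)^(1/q) := Real.rpow_pos_of_pos hbase _
      have hhead := VpAux.Fp_head_ub (q := q) hq1 hq2 hsmem.1.le hsmem.2
      have hFs : Fp q (sc (2*c*x)) = 2*c*x :=
        hinv₂ _ ⟨(hmem2 x hx).1.le, (hmem2 x hx).2.le⟩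
      rw [hFs] at hhead
      have hxle : x ≤ sc (2*c*x) * (1 - (sc (2*c*x))^q)^(-(1/q)) / (2*c) := by
        rw [le_div_iff₀ (by linarith : (0:ℝ) < 2*c)]
        linarith [hhead]
      have hCB : (1 - (sc (2*c*x))^q)^(-(1/q)) * (1 - (sc (2*c*x))^q)^(1/q) = 1 := by
        rw [Real.rpow_neg hbase.le]
        exact inv_mul_cancel₀ (ne_of_gt hB)
      have hss : sc (2*c*x) * (sc (2*c*x))^(q-2) = (sc (2*c*x))^(q-1) := by
        have h := Real.rpow_add hsmem.1 1 (q-2)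
        rw [Real.rpow_one] at h
        have h' : (1:ℝ) + (q-2) = q - 1 := by ring
        rw [h'] at h
        rw [← h]
      calc x * v x
          ≤ (sc (2*c*x) * (1 - (sc (2*c*x))^q)^(-(1/q)) / (2*c)) * v x :=
            mul_le_mul_of_nonneg_right hxle (hvpos x hx).le
        _ = ((q-1)/(2*c)) * (sc (2*c*x))^(q-1) := by
            rw [hvEq x hx]
            calc (sc (2*c*x) * (1 - (sc (2*c*x))^q)^(-(1/q)) / (2*c)) *
                  ((q - 1) * (sc (2*c*x)) ^ (q-2) * (1 - (sc (2*c*x)) ^ q) ^ (1/q))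
                = ((q-1)/(2*c)) * ((sc (2*c*x) * (sc (2*c*x))^(q-2)) *
                    ((1 - (sc (2*c*x))^q)^(-(1/q)) * (1 - (sc (2*c*x))^q)^(1/q))) := by
                  ring
              _ = ((q-1)/(2*c)) * (sc (2*c*x))^(q-1) := by
                  rw [hCB, hss, mul_one]
  exact ⟨hanti, hxv, hvTop, hv12⟩
end

section
/- For 1 < p < 2 and all j ≥ 1, the Fourier cosine coefficients satisfy |b_j(p)| < (8π_p/(j²π²)) · c_p, where c_p = (p-1)^{(p-1)/p}(2-p)^{(2-p)/p}. -/
open Real Set MeasureTheory intervalIntegral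

noncomputable def cp (p : ℝ) : ℝ := (p - 1) ^ ((p - 1) / p) * (2 - p) ^ ((2 - p) / p)

namespace SinP

noncomputable def fI (p t : ℝ) : ℝ := (1 - t ^ p) ^ (-(1/p))

variable {p : ℝ}

lemma ppos (hp1 : 1 < p) : 0 < p := lt_trans one_pos hp1

lemma base_pos (hp1 : 1 < p) {t : ℝ} (ht : 0 ≤ t) (h1 : t < 1) : 0 < 1 - t ^ p := by
  have : t ^ p < 1 := Real.rpow_lt_one ht h1 (ppos hp1)
  linarith

lemma base_nonneg (hp1 : 1 < p) {t : ℝ} (ht : 0 ≤ t) (h1 : t ≤ 1) : 0 ≤ 1 - t ^ p := by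
  have : t ^ p ≤ 1 := Real.rpow_le_one ht h1 (ppos hp1).le
  linarith

lemma rpow_le_self (hp1 : 1 < p) {t : ℝ} (ht : 0 ≤ t) (h1 : t ≤ 1) : t ^ p ≤ t := by
  rcases eq_or_lt_of_le ht with h | h
  · rw [← h, Real.zero_rpow (ppos hp1).ne']
  · calc t ^ p ≤ t ^ (1:ℝ) := Real.rpow_le_rpow_of_exponent_ge h h1 hp1.le
    _ = t := Real.rpow_one t

lemma cont_rpow_p (hp : 0 ≤ p) : Continuous fun t : ℝ => t ^ p := by
  rw [continuous_iff_continuousAt]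
  intro t
  rcases eq_or_ne t 0 with h | h
  · subst h
    exact Real.continuousAt_rpow_const 0 p (Or.inr hp)
  · exact Real.continuousAt_rpow_const t p (Or.inl h)

lemma cont_base (hp : 0 ≤ p) : Continuous fun t : ℝ => 1 - t ^ p :=
  continuous_const.sub (cont_rpow_p hp)

lemma meas_fI : Measurable (fI p) := by
  unfold fI; measurability

lemma fI_nonneg {t : ℝ} (hp1 : 1 < p) (ht : 0 ≤ t) (h1 : t ≤ 1) : 0 ≤ fI p t :=
  Real.rpow_nonneg (base_nonneg hp1 ht h1) _

lemma fI_pos (hp1 : 1 < p) {t : ℝ} (ht : 0 ≤ t) (h1 : t < 1) : 0 < fI p t :=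
  Real.rpow_pos_of_pos (base_pos hp1 ht h1) _

lemma fI_contAt (hp1 : 1 < p) {t : ℝ} (ht : 0 ≤ t) (h1 : t < 1) : ContinuousAt (fI p) t :=
  ContinuousAt.rpow_const (cont_base (ppos hp1).le).continuousAt (Or.inl (base_pos hp1 ht h1).ne')


/-- integrability of the basic singular model `(1-t)^e` on `[0,1]`, `e > -1`. -/
lemma intInt_one_sub_rpow {e : ℝ} (he : -1 < e) :
    IntervalIntegrable (fun t : ℝ => (1 - t) ^ e) volume 0 1 := by
  have h := ((intervalIntegrable_rpow' (a := 0) (b := 1) he).comp_sub_left 1).symm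
  simpa using h

lemma fI_le (hp1 : 1 < p) {t : ℝ} (ht : 0 < t) (h1 : t ≤ 1) : fI p t ≤ (1 - t) ^ (-(1/p)) := by
  rcases eq_or_lt_of_le h1 with h | h
  · subst h
    have hz : -(1/p) ≠ 0 := by
      have hp := ppos hp1
      have : (0:ℝ) < 1/p := by positivity
      linarith
    simp [fI, Real.one_rpow, Real.zero_rpow hz]
  · have h2 : 1 - t ≤ 1 - t ^ p := by
      have := rpow_le_self hp1 ht.le h1
      linarith
    have hz : -(1/p) ≤ 0 := by
      have hp := ppos hp1
      have : (0:ℝ) < 1/p := by positivity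
      linarith
    exact Real.rpow_le_rpow_of_nonpos (by linarith) h2 hz

lemma fI_intInt (hp1 : 1 < p) : IntervalIntegrable (fI p) volume 0 1 := by
  have hm : -1 < -(1/p) := by
    have hp := ppos hp1
    have : 1/p < 1 := by
      rw [div_lt_one hp]; exact hp1
    linarith
  refine (intInt_one_sub_rpow hm).mono_fun (meas_fI (p := p)).aestronglyMeasurable ?_
  rw [Filter.EventuallyLE, ae_restrict_iff' measurableSet_uIoc]
  filter_upwards with t ht
  rw [uIoc_of_le (by norm_num : (0:ℝ) ≤ 1)] at ht
  have h1 : 0 ≤ fI p t := fI_nonneg hp1 ht.1.le ht.2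
  rw [Real.norm_eq_abs, Real.norm_eq_abs, abs_of_nonneg h1,
    abs_of_nonneg (Real.rpow_nonneg (by linarith [ht.2] : (0:ℝ) ≤ 1 - t) _)]
  exact fI_le hp1 ht.1 ht.2


lemma F_zero : Fp p 0 = 0 := intervalIntegral.integral_same

lemma contF (hp1 : 1 < p) : ContinuousOn (Fp p) (Icc 0 1) := by
  have h : IntegrableOn (fI p) (uIcc 0 1) volume := (intervalIntegrable_iff').mp (fI_intInt hp1)
  have := continuousOn_primitive_interval (a := 0) (b := 1) (μ := volume) h
  rw [uIcc_of_le (by norm_num : (0:ℝ) ≤ 1)] at this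
  exact this

lemma fI_int_sub (hp1 : 1 < p) {a b : ℝ} (ha : 0 ≤ a) (hb : b ≤ 1) (hab : a ≤ b) :
    IntervalIntegrable (fI p) volume a b := by
  refine (fI_intInt hp1).mono_set ?_
  rw [uIcc_of_le hab, uIcc_of_le (by norm_num : (0:ℝ) ≤ 1)]
  exact Icc_subset_Icc ha hb

lemma F_hasDeriv (hp1 : 1 < p) {t : ℝ} (ht : t ∈ Ioo (0:ℝ) 1) :
    HasDerivAt (Fp p) (fI p t) t := by
  refine intervalIntegral.integral_hasDerivAt_right
    (fI_int_sub hp1 le_rfl ht.2.le ht.1.le)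
    ⟨Set.univ, Filter.univ_mem, (meas_fI (p := p)).aestronglyMeasurable.restrict⟩
    (fI_contAt hp1 ht.1.le ht.2)

lemma F_lt (hp1 : 1 < p) {a b : ℝ} (ha : 0 ≤ a) (hab : a < b) (hb : b ≤ 1) :
    Fp p a < Fp p b := by
  have hint1 : IntervalIntegrable (fI p) volume 0 a := fI_int_sub hp1 le_rfl (by linarith) ha
  have hint2 : IntervalIntegrable (fI p) volume a b := fI_int_sub hp1 ha hb hab.le
  have key : Fp p a + ∫ t in a..b, fI p t = Fp p b :=
    intervalIntegral.integral_add_adjacent_intervals hint1 hint2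
  have pos : 0 < ∫ t in a..b, fI p t :=
    intervalIntegral_pos_of_pos_on hint2
      (fun x hx => fI_pos hp1 (le_trans ha hx.1.le) (lt_of_lt_of_le hx.2 hb)) hab
  linarith

lemma F_pos (hp1 : 1 < p) {t : ℝ} (ht : 0 < t) (h1 : t ≤ 1) : 0 < Fp p t := by
  have := F_lt hp1 le_rfl ht h1
  rwa [F_zero] at this

lemma F_nonneg (hp1 : 1 < p) {t : ℝ} (ht : 0 ≤ t) (h1 : t ≤ 1) : 0 ≤ Fp p t := by
  rcases eq_or_lt_of_le ht with h | h
  · rw [← h, F_zero]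
  · exact (F_pos hp1 h h1).le

lemma F_le_F1 (hp1 : 1 < p) {t : ℝ} (ht : 0 ≤ t) (h1 : t ≤ 1) : Fp p t ≤ Fp p 1 := by
  rcases eq_or_lt_of_le h1 with h | h
  · rw [h]
  · exact (F_lt hp1 ht h le_rfl).le

lemma half_pip : pip p / 2 = Fp p 1 := by
  unfold pip; ring

lemma pip_pos (hp1 : 1 < p) : 0 < pip p := by
  have := F_pos hp1 one_pos le_rfl
  simp only [pip]; linarith

lemma F_monoOn (hp1 : 1 < p) : StrictMonoOn (Fp p) (Icc 0 1) :=
  fun a ha b hb hab => F_lt hp1 ha.1 hab hb.2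


section Sfacts

variable {s : ℝ → ℝ} (hp1 : 1 < p)
  (h₁ : ∀ y ∈ Icc (0:ℝ) 1, s (Fp p y) = y)

include hp1 h₁

lemma s_exists {x : ℝ} (hx : x ∈ Icc 0 (pip p / 2)) :
    ∃ y ∈ Icc (0:ℝ) 1, Fp p y = x ∧ s x = y := by
  have hsub := intermediate_value_Icc (by norm_num : (0:ℝ) ≤ 1) (contF hp1)
  have hx' : x ∈ Icc (Fp p 0) (Fp p 1) := by
    rwa [F_zero, ← half_pip]
  obtain ⟨y, hy, hFy⟩ := hsub hx'
  exact ⟨y, hy, hFy, by rw [← hFy, h₁ y hy]⟩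

lemma s_mem {x : ℝ} (hx : x ∈ Icc 0 (pip p / 2)) : s x ∈ Icc (0:ℝ) 1 ∧ Fp p (s x) = x := by
  obtain ⟨y, hy, hFy, hsy⟩ := s_exists hp1 h₁ hx
  exact ⟨hsy ▸ hy, by rw [hsy, hFy]⟩

lemma s_strictMono : StrictMonoOn s (Icc 0 (pip p / 2)) := by
  intro a ha b hb hab
  by_contra hle
  push_neg at hle
  have h1 := s_mem hp1 h₁ ha
  have h2 := s_mem hp1 h₁ hb
  have : Fp p (s b) ≤ Fp p (s a) := by
    rcases eq_or_lt_of_le hle with h | h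
    · rw [h]
    · exact (F_lt hp1 h2.1.1 h h1.1.2).le
  rw [h1.2, h2.2] at this
  linarith

lemma s_mem_Ioo {u : ℝ} (hu : u ∈ Ioo 0 (pip p / 2)) : s u ∈ Ioo (0:ℝ) 1 := by
  have h := s_mem hp1 h₁ (mem_Icc.mpr ⟨hu.1.le, hu.2.le⟩)
  rcases eq_or_lt_of_le h.1.1 with h0 | h0
  · exfalso
    have := h.2
    rw [← h0, F_zero] at this
    exact hu.1.ne this
  rcases eq_or_lt_of_le h.1.2 with h1 | h1
  · exfalso
    have := h.2
    rw [h1, ← half_pip] at this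
    exact hu.2.ne this.symm
  exact ⟨h0, h1⟩

lemma s_contAt {u : ℝ} (hu : u ∈ Ioo 0 (pip p / 2)) : ContinuousAt s u := by
  have hP : 0 < pip p := pip_pos hp1
  refine (s_strictMono hp1 h₁).continuousAt_of_image_mem_nhds
    (Icc_mem_nhds hu.1 hu.2) ?_
  have hsurj : Icc (0:ℝ) 1 ⊆ s '' Icc 0 (pip p / 2) := by
    intro y hy
    have hFy : Fp p y ∈ Icc 0 (pip p / 2) := by
      constructor
      · exact F_nonneg hp1 hy.1 hy.2
      · rw [half_pip]; exact F_le_F1 hp1 hy.1 hy.2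
    exact ⟨Fp p y, hFy, h₁ y hy⟩
  have hmem := s_mem_Ioo hp1 h₁ hu
  exact Filter.mem_of_superset (Icc_mem_nhds hmem.1 hmem.2) hsurj

lemma s_hasDeriv (h₂ : ∀ x ∈ Icc (0:ℝ) (pip p / 2), Fp p (s x) = x)
    {u : ℝ} (hu : u ∈ Ioo 0 (pip p / 2)) :
    HasDerivAt s ((1 - (s u) ^ p) ^ (1/p)) u := by
  have hmem := s_mem_Ioo hp1 h₁ hu
  have hf : HasDerivAt (Fp p) (fI p (s u)) (s u) := F_hasDeriv hp1 hmem
  have hne : fI p (s u) ≠ 0 := (fI_pos hp1 hmem.1.le hmem.2).ne'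
  have hev : ∀ᶠ y in nhds u, Fp p (s y) = y := by
    filter_upwards [Icc_mem_nhds hu.1 hu.2] with y hy
    exact h₂ y hy
  have := HasDerivAt.of_local_left_inverse (s_contAt hp1 h₁ hu) hf hne hev
  have heq : (fI p (s u))⁻¹ = (1 - (s u) ^ p) ^ (1/p) := by
    rw [fI, Real.rpow_neg (base_nonneg hp1 hmem.1.le hmem.2.le), inv_inv]
  rwa [heq] at this

end Sfacts


section Subst

variable {s : ℝ → ℝ} (hp1 : 1 < p)
  (h₁ : ∀ y ∈ Icc (0:ℝ) 1, s (Fp p y) = y)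
  (h₂ : ∀ x ∈ Icc (0:ℝ) (pip p / 2), Fp p (s x) = x)

include hp1 h₁ h₂

lemma deriv_s_eq {u : ℝ} (hu : u ∈ Ioo 0 (pip p / 2)) :
    deriv s u = (1 - (s u) ^ p) ^ (1/p) := (s_hasDeriv hp1 h₁ h₂ hu).deriv

lemma deriv_s_bound {u : ℝ} (hu : u ∈ Ioo 0 (pip p / 2)) :
    deriv s u ∈ Icc (0:ℝ) 1 := by
  rw [deriv_s_eq hp1 h₁ h₂ hu]
  have hmem := s_mem_Ioo hp1 h₁ hu
  have h0 : (0:ℝ) ≤ 1 - (s u) ^ p := base_nonneg hp1 hmem.1.le hmem.2.le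
  have h1' : 1 - (s u) ^ p ≤ 1 := by
    have := Real.rpow_nonneg hmem.1.le p
    linarith
  have hq : (0:ℝ) ≤ 1/p := by
    have := ppos hp1; positivity
  exact ⟨Real.rpow_nonneg h0 _, Real.rpow_le_one h0 h1' hq⟩

lemma s_contOn : ContinuousOn s (Ioo 0 (pip p / 2)) :=
  fun u hu => (s_contAt hp1 h₁ hu).continuousWithinAt

lemma deriv_s_contOn : ContinuousOn (deriv s) (Ioo 0 (pip p / 2)) := by
  have hc : ContinuousOn (fun u => (1 - (s u) ^ p) ^ (1/p)) (Ioo 0 (pip p / 2)) := by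
    refine ContinuousOn.rpow_const ?_ (fun u hu => Or.inr (by
      have := ppos hp1; positivity))
    exact (cont_base (ppos hp1).le).comp_continuousOn (s_contOn hp1 h₁ h₂)
  exact ContinuousOn.congr hc (fun u hu => deriv_s_eq hp1 h₁ h₂ hu)

lemma subst_lemma (ω : ℝ) :
    ∫ u in (0:ℝ)..(pip p / 2), deriv s u * Real.cos (ω * u) =
      ∫ t in (0:ℝ)..1, Real.cos (ω * Fp p t) := by
  set g : ℝ → ℝ := fun u => deriv s u * Real.cos (ω * u) with hg
  have hP : 0 < pip p := pip_pos hp1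
  have himg_Ioo : Fp p '' Ioo 0 1 ⊆ Ioo 0 (pip p / 2) := by
    rintro - ⟨t, ht, rfl⟩
    refine ⟨F_pos hp1 ht.1 ht.2.le, ?_⟩
    rw [half_pip]; exact F_lt hp1 ht.1.le ht.2 le_rfl
  have himg_Icc : Fp p '' Icc 0 1 ⊆ Icc 0 (pip p / 2) := by
    rintro - ⟨t, ht, rfl⟩
    exact ⟨F_nonneg hp1 ht.1 ht.2, by rw [half_pip]; exact F_le_F1 hp1 ht.1 ht.2⟩
  have hg_meas : Measurable g := by
    exact (measurable_deriv s).mul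
      ((Real.continuous_cos.comp (continuous_const.mul continuous_id)).measurable)
  have hIoo_Icc : volume.restrict (Ioo (0:ℝ) (pip p / 2)) =
      volume.restrict (Icc (0:ℝ) (pip p / 2)) :=
    (Measure.restrict_congr_set Ioo_ae_eq_Icc)
  have hg1 : IntegrableOn g (Icc 0 (pip p / 2)) volume := by
    rw [IntegrableOn, ← hIoo_Icc]
    refine Integrable.mono' (integrable_const 1) (hg_meas.aestronglyMeasurable.restrict) ?_
    rw [ae_restrict_iff' measurableSet_Ioo]
    filter_upwards with u hu
    have hb := deriv_s_bound hp1 h₁ h₂ hu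
    rw [Real.norm_eq_abs, abs_mul]
    have h1 : |deriv s u| ≤ 1 := abs_le.mpr ⟨by linarith [hb.1], hb.2⟩
    have h2 : |Real.cos (ω * u)| ≤ 1 := Real.abs_cos_le_one _
    nlinarith [abs_nonneg (deriv s u), abs_nonneg (Real.cos (ω * u))]
  have hpt : ∀ x ∈ Ioo (0:ℝ) 1, fI p x • (g ∘ Fp p) x = Real.cos (ω * Fp p x) := by
    intro x hx
    have hFx : Fp p x ∈ Ioo 0 (pip p / 2) := himg_Ioo ⟨x, hx, rfl⟩
    have hds : deriv s (Fp p x) = (1 - x ^ p) ^ (1/p) := by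
      rw [deriv_s_eq hp1 h₁ h₂ hFx, h₁ x ⟨hx.1.le, hx.2.le⟩]
    have hne : fI p x ≠ 0 := (fI_pos hp1 hx.1.le hx.2).ne'
    have hinv : fI p x * (1 - x ^ p) ^ (1/p) = 1 := by
      rw [fI, Real.rpow_neg (base_nonneg hp1 hx.1.le hx.2.le)]
      exact inv_mul_cancel₀ (Real.rpow_pos_of_pos (base_pos hp1 hx.1.le hx.2) _).ne'
    show fI p x * (deriv s (Fp p x) * Real.cos (ω * Fp p x)) = _
    rw [hds, ← mul_assoc, hinv, one_mul]
  have hcos : IntegrableOn (fun x => Real.cos (ω * Fp p x)) (Icc (0:ℝ) 1) volume :=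
    ContinuousOn.integrableOn_Icc (Real.continuous_cos.comp_continuousOn
      ((continuous_const.mul continuous_id).comp_continuousOn (contF hp1)))
  have hae : (fun x => fI p x • (g ∘ Fp p) x) =ᵐ[volume.restrict (Icc (0:ℝ) 1)]
      (fun x => Real.cos (ω * Fp p x)) := by
    have h' : ∀ᵐ x ∂volume.restrict (Ioo (0:ℝ) 1),
        fI p x • (g ∘ Fp p) x = Real.cos (ω * Fp p x) := by
      rw [ae_restrict_iff' measurableSet_Ioo]
      filter_upwards with x hx
      exact hpt x hx
    rw [← Measure.restrict_congr_set Ioo_ae_eq_Icc]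
    exact h'
  have hg2 : IntegrableOn (fun x => fI p x • (g ∘ Fp p) x) (uIcc (0:ℝ) 1) volume := by
    rw [uIcc_of_le (by norm_num : (0:ℝ) ≤ 1)]
    exact hcos.congr hae.symm
  have heq2 : ∫ x in (0:ℝ)..1, fI p x • (g ∘ Fp p) x = ∫ t in (0:ℝ)..1, Real.cos (ω * Fp p t) := by
    refine intervalIntegral.integral_congr_ae ?_
    have h1 : ∀ᵐ x : ℝ, x ≠ (1:ℝ) := by
      rw [ae_iff]
      have hset : {x : ℝ | ¬ x ≠ 1} = {1} := by ext x; simp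
      rw [hset, Real.volume_singleton]
    filter_upwards [h1] with x hx hmem
    rw [uIoc_of_le (by norm_num : (0:ℝ) ≤ 1)] at hmem
    exact hpt x ⟨hmem.1, lt_of_le_of_ne hmem.2 hx⟩
  have key := intervalIntegral.integral_comp_smul_deriv''' (f := Fp p) (f' := fI p)
    (g := g) (a := 0) (b := 1)
    (by rw [uIcc_of_le (by norm_num : (0:ℝ) ≤ 1)]; exact contF hp1)
    (by
      intro x hx
      rw [min_eq_left (by norm_num : (0:ℝ) ≤ 1), max_eq_right (by norm_num : (0:ℝ) ≤ 1)] at hx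
      exact (F_hasDeriv hp1 hx).hasDerivWithinAt)
    (by
      rw [min_eq_left (by norm_num : (0:ℝ) ≤ 1), max_eq_right (by norm_num : (0:ℝ) ≤ 1)]
      exact ((deriv_s_contOn hp1 h₁ h₂).mul
        (Real.continuous_cos.comp (continuous_const.mul continuous_id)).continuousOn).mono himg_Ioo)
    (by
      rw [uIcc_of_le (by norm_num : (0:ℝ) ≤ 1)]
      exact hg1.mono_set himg_Icc)
    hg2
  rw [F_zero, ← half_pip] at key
  rw [← key, heq2]

end Subst


noncomputable def phi (p t : ℝ) : ℝ := t ^ (p-1) * (1 - t ^ p) ^ ((2-p)/p)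
noncomputable def dphi (p t : ℝ) : ℝ :=
  t ^ (p-2) * (1 - t ^ p) ^ ((2-2*p)/p) * ((p-1) - t ^ p)
noncomputable def rr (p t : ℝ) : ℝ := t ^ (p-1) * (1 - t ^ p) ^ ((1-p)/p)
noncomputable def ts (p : ℝ) : ℝ := (p-1) ^ (1/p)

section Phi

variable (hp1 : 1 < p) (hp2 : p < 2)

lemma hasDeriv_tpow {c t : ℝ} (ht : 0 < t) :
    HasDerivAt (fun x : ℝ => x ^ c) (c * t ^ (c - 1)) t :=
  Real.hasDerivAt_rpow_const (Or.inl ht.ne')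

include hp1 in
lemma hasDeriv_base {t : ℝ} (ht : 0 < t) :
    HasDerivAt (fun x : ℝ => 1 - x ^ p) (-(p * t ^ (p - 1))) t :=
  HasDerivAt.const_sub 1 (hasDeriv_tpow ht)

include hp1 in
lemma hasDeriv_ubase {e : ℝ} {t : ℝ} (ht : t ∈ Ioo (0:ℝ) 1) :
    HasDerivAt (fun x : ℝ => (1 - x ^ p) ^ e)
      (-(p * t ^ (p-1)) * e * (1 - t ^ p) ^ (e-1)) t :=
  (hasDeriv_base hp1 ht.1).rpow_const (Or.inl (base_pos hp1 ht.1.le ht.2).ne')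

include hp1 hp2 in
lemma hasDeriv_phi {t : ℝ} (ht : t ∈ Ioo (0:ℝ) 1) :
    HasDerivAt (phi p) (dphi p t) t := by
  have ht0 := ht.1
  have hu : 0 < 1 - t ^ p := base_pos hp1 ht.1.le ht.2
  have d1 : HasDerivAt (fun x : ℝ => x ^ (p-1)) ((p-1) * t ^ (p-1-1)) t := hasDeriv_tpow ht0
  have d2 := hasDeriv_ubase hp1 (e := (2-p)/p) ht
  have prod := d1.mul d2
  have heq : (p-1) * t ^ (p-1-1) * (1 - t ^ p) ^ ((2-p)/p) +
      t ^ (p-1) * (-(p * t ^ (p-1)) * ((2-p)/p) * (1 - t ^ p) ^ ((2-p)/p - 1)) = dphi p t := by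
    have hp0 : (0:ℝ) < p := ppos hp1
    have e1 : t ^ (p-1) * t ^ (p-1) = t ^ (p-2) * t ^ p := by
      rw [← Real.rpow_add ht0, ← Real.rpow_add ht0]; ring_nf
    have e2 : (1 - t ^ p) ^ ((2-p)/p) = (1 - t ^ p) ^ ((2-p)/p - 1) * (1 - t ^ p) := by
      nth_rewrite 1 [show (2-p)/p = ((2-p)/p - 1) + 1 by ring]
      rw [Real.rpow_add_one hu.ne']
    have e3 : t ^ (p-1-1) = t ^ (p-2) := by rw [show p-1-1 = p-2 by ring]
    have e4 : (2-p)/p * p = 2 - p := div_mul_cancel₀ _ hp0.ne'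
    rw [e2, e3, dphi]
    have expand : (p-1) * t ^ (p-2) * ((1 - t ^ p) ^ ((2-p)/p - 1) * (1 - t ^ p)) +
        t ^ (p-1) * (-(p * t ^ (p-1)) * ((2-p)/p) * (1 - t ^ p) ^ ((2-p)/p - 1)) =
        (1 - t ^ p) ^ ((2-p)/p - 1) *
          ((p-1) * t ^ (p-2) * (1 - t ^ p) - ((2-p)/p * p) * (t ^ (p-1) * t ^ (p-1))) := by
      ring
    rw [expand, e4, e1]
    have : (2-2*p)/p = (2-p)/p - 1 := by field_simp; ring
    rw [this]; ring
  rw [show phi p = fun x : ℝ => x ^ (p-1) * (1 - x ^ p) ^ ((2-p)/p) from rfl]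
  exact heq ▸ prod


include hp1 in
lemma hasDeriv_sinF {ω t : ℝ} (ht : t ∈ Ioo (0:ℝ) 1) :
    HasDerivAt (fun x => Real.sin (ω * Fp p x)) (Real.cos (ω * Fp p t) * (ω * fI p t)) t :=
  ((F_hasDeriv hp1 ht).const_mul ω).sin

include hp1 in
lemma hasDeriv_cosF {ω t : ℝ} (ht : t ∈ Ioo (0:ℝ) 1) :
    HasDerivAt (fun x => Real.cos (ω * Fp p x)) (-Real.sin (ω * Fp p t) * (ω * fI p t)) t :=
  ((F_hasDeriv hp1 ht).const_mul ω).cos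

include hp1 in
lemma fIinv {t : ℝ} (ht : t ∈ Ioo (0:ℝ) 1) : (1 - t ^ p) ^ (1/p) * fI p t = 1 := by
  rw [fI, Real.rpow_neg (base_nonneg hp1 ht.1.le ht.2.le)]
  exact mul_inv_cancel₀ (Real.rpow_pos_of_pos (base_pos hp1 ht.1.le ht.2) _).ne'

include hp1 in
lemma phi_mul_fI {t : ℝ} (ht : t ∈ Ioo (0:ℝ) 1) : phi p t * fI p t = rr p t := by
  have hu : 0 < 1 - t ^ p := base_pos hp1 ht.1.le ht.2
  rw [phi, rr, fI, mul_assoc, ← Real.rpow_add hu]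
  congr 1
  rw [show (2-p)/p + -(1/p) = (1-p)/p by ring]

include hp1 in
lemma hasDeriv_H (ω : ℝ) {t : ℝ} (ht : t ∈ Ioo (0:ℝ) 1) :
    HasDerivAt (fun x => (1 - x ^ p) ^ (1/p) * Real.sin (ω * Fp p x))
      (ω * Real.cos (ω * Fp p t) - rr p t * Real.sin (ω * Fp p t)) t := by
  have prod := (hasDeriv_ubase hp1 (e := 1/p) ht).fun_mul (hasDeriv_sinF hp1 (ω := ω) ht)
  have hfi := fIinv hp1 ht
  have hpinv : p * (1/p) = 1 := by
    field_simp
  have her : (1:ℝ)/p - 1 = (1-p)/p := by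
    field_simp
  refine prod.congr_deriv ?_
  symm
  rw [rr, ← her]
  linear_combination (-(ω * Real.cos (ω * Fp p t))) * hfi +
    (t ^ (p-1) * (1 - t ^ p) ^ (1/p - 1) * Real.sin (ω * Fp p t)) * hpinv

include hp1 hp2 in
lemma hasDeriv_K (ω : ℝ) {t : ℝ} (ht : t ∈ Ioo (0:ℝ) 1) :
    HasDerivAt (fun x => phi p x * Real.cos (ω * Fp p x))
      (dphi p t * Real.cos (ω * Fp p t) - ω * rr p t * Real.sin (ω * Fp p t)) t := by
  have prod := (hasDeriv_phi hp1 hp2 ht).fun_mul (hasDeriv_cosF hp1 (ω := ω) ht)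
  have hfi := phi_mul_fI hp1 ht
  refine prod.congr_deriv ?_
  symm
  linear_combination (ω * Real.sin (ω * Fp p t)) * hfi

include hp1 hp2 in
lemma contOn_phi : ContinuousOn (phi p) (Icc 0 1) := by
  have h1 : Continuous fun t : ℝ => t ^ (p-1) := cont_rpow_p (by linarith)
  have h2 : ContinuousOn (fun t : ℝ => (1 - t ^ p) ^ ((2-p)/p)) (Icc 0 1) := by
    refine ContinuousOn.rpow_const (cont_base (ppos hp1).le).continuousOn ?_
    intro x hx
    right
    have hp0 := ppos hp1
    have h2p : (0:ℝ) < 2 - p := by linarith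
    positivity
  exact h1.continuousOn.mul h2

include hp1 in
lemma phi_zero : phi p 0 = 0 := by
  rw [phi, Real.zero_rpow (by linarith : p - 1 ≠ 0), zero_mul]

include hp1 hp2 in
lemma phi_one : phi p 1 = 0 := by
  have : (1:ℝ) - 1 ^ p = 0 := by rw [Real.one_rpow]; ring
  rw [phi, this, Real.zero_rpow, mul_zero]
  have hp0 := ppos hp1
  have h2p : (0:ℝ) < 2 - p := by linarith
  positivity

include hp1 hp2 in
lemma phi_ts : phi p (ts p) = cp p := by
  have hps : 0 < p - 1 := by linarith
  have hp0 := ppos hp1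
  have h1 : ts p ^ p = p - 1 := by
    rw [ts, ← Real.rpow_mul hps.le, one_div, inv_mul_cancel₀ hp0.ne', Real.rpow_one]
  have h2 : ts p ^ (p-1) = (p-1) ^ ((p-1)/p) := by
    rw [ts, ← Real.rpow_mul hps.le]
    congr 1
    field_simp
  rw [phi, h1, h2, cp]
  congr 2
  ring

lemma ts_mem (hp1 : 1 < p) (hp2 : p < 2) : ts p ∈ Ioo (0:ℝ) 1 := by
  have hp0 := ppos hp1
  constructor
  · exact Real.rpow_pos_of_pos (by linarith) _
  · exact Real.rpow_lt_one (by linarith) (by linarith) (by positivity)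

end Phi


section Integrab

variable (hp1 : 1 < p) (hp2 : p < 2)

lemma meas_rr : Measurable (rr p) := by
  unfold rr; measurability

lemma meas_dphi : Measurable (dphi p) := by
  unfold dphi; measurability

lemma aesm_Ioc {f : ℝ → ℝ} {a b : ℝ} (hf : ContinuousOn f (Ioo a b)) :
    AEStronglyMeasurable f (volume.restrict (Ioc a b)) := by
  rw [← Measure.restrict_congr_set Ioo_ae_eq_Ioc]
  exact hf.aestronglyMeasurable measurableSet_Ioo

include hp1 in
lemma rr_nonneg {t : ℝ} (ht : 0 ≤ t) (h1 : t ≤ 1) : 0 ≤ rr p t :=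
  mul_nonneg (Real.rpow_nonneg ht _) (Real.rpow_nonneg (base_nonneg hp1 ht h1) _)

include hp1 hp2 in
lemma rr_le {t : ℝ} (ht : 0 < t) (h1 : t ≤ 1) : rr p t ≤ (1 - t) ^ ((1-p)/p) := by
  have hp0 := ppos hp1
  have he : (1-p)/p ≤ 0 := by
    apply div_nonpos_of_nonpos_of_nonneg <;> linarith
  rcases eq_or_lt_of_le h1 with h | h
  · subst h
    have : (1:ℝ) - 1 ^ p = 0 := by rw [Real.one_rpow]; ring
    rw [rr, this, Real.zero_rpow (by
      intro hc
      have : 1 - p = 0 := by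
        field_simp at hc
        linarith
      linarith), mul_zero]
    exact Real.rpow_nonneg (by norm_num) _
  · have hb1 : t ^ (p-1) ≤ 1 := Real.rpow_le_one ht.le h1 (by linarith)
    have hb2 : (1 - t ^ p) ^ ((1-p)/p) ≤ (1 - t) ^ ((1-p)/p) := by
      apply Real.rpow_le_rpow_of_nonpos (by linarith) ?_ he
      have := rpow_le_self hp1 ht.le h1
      linarith
    calc rr p t ≤ 1 * ((1 - t ^ p) ^ ((1-p)/p)) :=
          mul_le_mul_of_nonneg_right hb1 (Real.rpow_nonneg (base_nonneg hp1 ht.le h1) _)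
    _ = (1 - t ^ p) ^ ((1-p)/p) := one_mul _
    _ ≤ (1 - t) ^ ((1-p)/p) := hb2

include hp1 hp2 in
lemma rr_intInt : IntervalIntegrable (rr p) volume 0 1 := by
  have hp0 := ppos hp1
  have he : (-1:ℝ) < (1-p)/p := by
    rw [lt_div_iff₀ hp0]; linarith
  refine (intInt_one_sub_rpow he).mono_fun (meas_rr (p := p)).aestronglyMeasurable ?_
  rw [Filter.EventuallyLE, ae_restrict_iff' measurableSet_uIoc]
  filter_upwards with t ht
  rw [uIoc_of_le (by norm_num : (0:ℝ) ≤ 1)] at ht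
  rw [Real.norm_eq_abs, Real.norm_eq_abs, abs_of_nonneg (rr_nonneg hp1 ht.1.le ht.2),
    abs_of_nonneg (Real.rpow_nonneg (by linarith [ht.2] : (0:ℝ) ≤ 1 - t) _)]
  exact rr_le hp1 hp2 ht.1 ht.2

include hp1 hp2 in
lemma dphi_abs_factor {t : ℝ} (ht : 0 ≤ t) (h1 : t ≤ 1) : |(p-1) - t ^ p| ≤ 1 := by
  have h0 : 0 ≤ t ^ p := Real.rpow_nonneg ht _
  have h2 : t ^ p ≤ 1 := Real.rpow_le_one ht h1 (ppos hp1).le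
  rw [abs_le]
  constructor <;> linarith

include hp1 hp2 in
lemma dphi_intInt1 : IntervalIntegrable (dphi p) volume 0 (1/2) := by
  have hp0 := ppos hp1
  have hm : (0:ℝ) < 1 - (1/2 : ℝ) ^ p := base_pos hp1 (by norm_num) (by norm_num)
  set C := (1 - (1/2 : ℝ) ^ p) ^ ((2-2*p)/p) with hC
  have he2 : (2-2*p)/p ≤ 0 := by
    apply div_nonpos_of_nonpos_of_nonneg <;> linarith
  have hmodel : IntervalIntegrable (fun t : ℝ => C * t ^ (p-2)) volume 0 (1/2) :=
    (intervalIntegrable_rpow' (by linarith : (-1:ℝ) < p - 2)).const_mul C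
  refine hmodel.mono_fun (meas_dphi (p := p)).aestronglyMeasurable ?_
  rw [Filter.EventuallyLE, ae_restrict_iff' measurableSet_uIoc]
  filter_upwards with t ht
  rw [uIoc_of_le (by norm_num : (0:ℝ) ≤ 1/2)] at ht
  have ht1 : t ≤ 1 := by linarith [ht.2]
  have hb1 : 0 ≤ t ^ (p-2) := Real.rpow_nonneg ht.1.le _
  have hu : 0 < 1 - t ^ p := base_pos hp1 ht.1.le (by linarith [ht.2] : t < 1)
  have hub : (1 - t ^ p) ^ ((2-2*p)/p) ≤ C := by
    apply Real.rpow_le_rpow_of_nonpos hm ?_ he2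
    have : t ^ p ≤ (1/2:ℝ) ^ p := Real.rpow_le_rpow ht.1.le ht.2 hp0.le
    linarith
  have habs := dphi_abs_factor hp1 hp2 ht.1.le ht1
  rw [Real.norm_eq_abs, Real.norm_eq_abs, dphi]
  have hCpos : 0 < C := Real.rpow_pos_of_pos hm _
  rw [abs_of_nonneg (by positivity : 0 ≤ C * t ^ (p-2)), abs_mul, abs_mul,
    abs_of_nonneg hb1, abs_of_nonneg (Real.rpow_nonneg hu.le _)]
  calc t ^ (p-2) * (1 - t ^ p) ^ ((2-2*p)/p) * |(p-1) - t ^ p|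
      ≤ t ^ (p-2) * (1 - t ^ p) ^ ((2-2*p)/p) * 1 := by
        apply mul_le_mul_of_nonneg_left habs
        positivity
    _ = t ^ (p-2) * (1 - t ^ p) ^ ((2-2*p)/p) := mul_one _
    _ ≤ t ^ (p-2) * C := by
        apply mul_le_mul_of_nonneg_left hub hb1
    _ = C * t ^ (p-2) := mul_comm _ _

include hp1 hp2 in
lemma dphi_intInt2 : IntervalIntegrable (dphi p) volume (1/2) 1 := by
  have hp0 := ppos hp1
  set C := ((1:ℝ)/2) ^ (p-2) with hC
  have hCpos : 0 < C := Real.rpow_pos_of_pos (by norm_num) _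
  have he2 : (2-2*p)/p ≤ 0 := by
    apply div_nonpos_of_nonpos_of_nonneg <;> linarith
  have he2' : (-1:ℝ) < (2-2*p)/p := by
    rw [lt_div_iff₀ hp0]; linarith
  have hmodel : IntervalIntegrable (fun t : ℝ => C * (1 - t) ^ ((2-2*p)/p)) volume (1/2) 1 := by
    refine ((intInt_one_sub_rpow he2').const_mul C).mono_set ?_
    rw [uIcc_of_le (by norm_num : (1:ℝ)/2 ≤ 1), uIcc_of_le (by norm_num : (0:ℝ) ≤ 1)]
    exact Icc_subset_Icc (by norm_num) le_rfl
  refine hmodel.mono_fun (meas_dphi (p := p)).aestronglyMeasurable ?_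
  rw [Filter.EventuallyLE, ae_restrict_iff' measurableSet_uIoc]
  filter_upwards with t ht
  rw [uIoc_of_le (by norm_num : (1:ℝ)/2 ≤ 1)] at ht
  have ht0 : (0:ℝ) < t := by linarith [ht.1]
  have hb1 : t ^ (p-2) ≤ C := Real.rpow_le_rpow_of_nonpos (by norm_num) ht.1.le (by linarith)
  have hb1' : 0 ≤ t ^ (p-2) := Real.rpow_nonneg ht0.le _
  have habs := dphi_abs_factor hp1 hp2 ht0.le ht.2
  have h1t : (0:ℝ) ≤ 1 - t := by linarith [ht.2]
  have hub : (1 - t ^ p) ^ ((2-2*p)/p) ≤ (1 - t) ^ ((2-2*p)/p) := by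
    rcases eq_or_lt_of_le ht.2 with h | h
    · subst h
      have h0 : (1:ℝ) - 1 ^ p = 0 := by rw [Real.one_rpow]; ring
      rw [h0, show (1:ℝ) - 1 = 0 by ring]
    · apply Real.rpow_le_rpow_of_nonpos (by linarith) ?_ he2
      have := rpow_le_self hp1 ht0.le ht.2
      linarith
  have hunn : 0 ≤ (1 - t ^ p) ^ ((2-2*p)/p) :=
    Real.rpow_nonneg (base_nonneg hp1 ht0.le ht.2) _
  rw [Real.norm_eq_abs, Real.norm_eq_abs, dphi]
  rw [abs_of_nonneg (by positivity : 0 ≤ C * (1-t) ^ ((2-2*p)/p)), abs_mul, abs_mul,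
    abs_of_nonneg hb1', abs_of_nonneg hunn]
  calc t ^ (p-2) * (1 - t ^ p) ^ ((2-2*p)/p) * |(p-1) - t ^ p|
      ≤ t ^ (p-2) * (1 - t ^ p) ^ ((2-2*p)/p) * 1 := by
        apply mul_le_mul_of_nonneg_left habs
        positivity
    _ = t ^ (p-2) * (1 - t ^ p) ^ ((2-2*p)/p) := mul_one _
    _ ≤ C * (1 - t) ^ ((2-2*p)/p) := by
        apply mul_le_mul hb1 hub hunn hCpos.le
  
include hp1 hp2 in
lemma dphi_intInt : IntervalIntegrable (dphi p) volume 0 1 :=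
  (dphi_intInt1 hp1 hp2).trans (dphi_intInt2 hp1 hp2)

end Integrab


section IBP

variable (hp1 : 1 < p) (hp2 : p < 2)

include hp1 in
lemma contOn_cosF (ω : ℝ) : ContinuousOn (fun t => Real.cos (ω * Fp p t)) (Icc 0 1) :=
  Real.continuous_cos.comp_continuousOn
    ((continuous_const.mul continuous_id).comp_continuousOn (contF hp1))

include hp1 in
lemma contOn_sinF (ω : ℝ) : ContinuousOn (fun t => Real.sin (ω * Fp p t)) (Icc 0 1) :=
  Real.continuous_sin.comp_continuousOn
    ((continuous_const.mul continuous_id).comp_continuousOn (contF hp1))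

include hp1 in
lemma int_cosF (ω : ℝ) :
    IntervalIntegrable (fun t => Real.cos (ω * Fp p t)) volume 0 1 := by
  apply ContinuousOn.intervalIntegrable
  rw [uIcc_of_le (by norm_num : (0:ℝ) ≤ 1)]
  exact contOn_cosF hp1 ω

lemma contOn_tpow_Ioo {c : ℝ} : ContinuousOn (fun t : ℝ => t ^ c) (Ioo 0 1) :=
  fun t ht => (Real.continuousAt_rpow_const t c (Or.inl ht.1.ne')).continuousWithinAt

include hp1 in
lemma contOn_ubase_Ioo {e : ℝ} : ContinuousOn (fun t : ℝ => (1 - t ^ p) ^ e) (Ioo 0 1) := by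
  refine ContinuousOn.rpow_const (cont_base (ppos hp1).le).continuousOn ?_
  exact fun t ht => Or.inl (base_pos hp1 ht.1.le ht.2).ne'

include hp1 in
lemma contOn_rr_Ioo : ContinuousOn (rr p) (Ioo 0 1) :=
  contOn_tpow_Ioo.mul (contOn_ubase_Ioo hp1)

include hp1 in
lemma contOn_dphi_Ioo : ContinuousOn (dphi p) (Ioo 0 1) := by
  refine ContinuousOn.mul (contOn_tpow_Ioo.mul (contOn_ubase_Ioo hp1)) ?_
  exact (continuous_const.sub (cont_rpow_p (ppos hp1).le)).continuousOn

include hp1 hp2 in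
lemma int_rr_sinF (ω : ℝ) :
    IntervalIntegrable (fun t => rr p t * Real.sin (ω * Fp p t)) volume 0 1 := by
  refine (rr_intInt hp1 hp2).mono_fun ?_ ?_
  · rw [uIoc_of_le (by norm_num : (0:ℝ) ≤ 1)]
    exact aesm_Ioc ((contOn_rr_Ioo hp1).mul
      ((contOn_sinF hp1 ω).mono Ioo_subset_Icc_self))
  · rw [Filter.EventuallyLE]
    filter_upwards with t
    rw [Real.norm_eq_abs, Real.norm_eq_abs, abs_mul]
    calc |rr p t| * |Real.sin (ω * Fp p t)| ≤ |rr p t| * 1 :=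
          mul_le_mul_of_nonneg_left (Real.abs_sin_le_one _) (abs_nonneg _)
      _ = |rr p t| := mul_one _

include hp1 hp2 in
lemma int_dphi_cosF (ω : ℝ) :
    IntervalIntegrable (fun t => dphi p t * Real.cos (ω * Fp p t)) volume 0 1 := by
  refine (dphi_intInt hp1 hp2).mono_fun ?_ ?_
  · rw [uIoc_of_le (by norm_num : (0:ℝ) ≤ 1)]
    exact aesm_Ioc ((contOn_dphi_Ioo hp1).mul
      ((contOn_cosF hp1 ω).mono Ioo_subset_Icc_self))
  · rw [Filter.EventuallyLE]
    filter_upwards with t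
    rw [Real.norm_eq_abs, Real.norm_eq_abs, abs_mul]
    calc |dphi p t| * |Real.cos (ω * Fp p t)| ≤ |dphi p t| * 1 :=
          mul_le_mul_of_nonneg_left (Real.abs_cos_le_one _) (abs_nonneg _)
      _ = |dphi p t| := mul_one _

include hp1 hp2 in
lemma IBP1 (ω : ℝ) :
    ∫ t in (0:ℝ)..1, rr p t * Real.sin (ω * Fp p t) =
      ω * ∫ t in (0:ℝ)..1, Real.cos (ω * Fp p t) := by
  have hp0 := ppos hp1
  set H : ℝ → ℝ := fun x => (1 - x ^ p) ^ (1/p) * Real.sin (ω * Fp p x) with hH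
  have hcont : ContinuousOn H (Icc 0 1) := by
    refine ContinuousOn.mul ?_ (contOn_sinF hp1 ω)
    refine ContinuousOn.rpow_const (cont_base hp0.le).continuousOn ?_
    exact fun x hx => Or.inr (by positivity)
  have hderiv : ∀ x ∈ Ioo (0:ℝ) 1, HasDerivWithinAt H
      (ω * Real.cos (ω * Fp p x) - rr p x * Real.sin (ω * Fp p x)) (Ioi x) x :=
    fun x hx => (hasDeriv_H hp1 ω hx).hasDerivWithinAt
  have hint : IntervalIntegrable
      (fun x => ω * Real.cos (ω * Fp p x) - rr p x * Real.sin (ω * Fp p x)) volume 0 1 :=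
    ((int_cosF hp1 ω).const_mul ω).sub (int_rr_sinF hp1 hp2 ω)
  have key := intervalIntegral.integral_eq_sub_of_hasDeriv_right_of_le
    (by norm_num : (0:ℝ) ≤ 1) hcont hderiv hint
  have hH1 : H 1 = 0 := by
    have : (1:ℝ) - 1 ^ p = 0 := by rw [Real.one_rpow]; ring
    rw [hH]
    simp only [this, Real.zero_rpow (by positivity : (1:ℝ)/p ≠ 0), zero_mul]
  have hH0 : H 0 = 0 := by
    rw [hH]
    simp only [F_zero, mul_zero, Real.sin_zero]
  rw [hH1, hH0, sub_zero] at key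
  rw [intervalIntegral.integral_sub ((int_cosF hp1 ω).const_mul ω) (int_rr_sinF hp1 hp2 ω),
    intervalIntegral.integral_const_mul] at key
  linarith [key]

include hp1 hp2 in
lemma IBP2 (ω : ℝ) :
    ∫ t in (0:ℝ)..1, dphi p t * Real.cos (ω * Fp p t) =
      ω * ∫ t in (0:ℝ)..1, rr p t * Real.sin (ω * Fp p t) := by
  set K : ℝ → ℝ := fun x => phi p x * Real.cos (ω * Fp p x) with hK
  have hcont : ContinuousOn K (Icc 0 1) := (contOn_phi hp1 hp2).mul (contOn_cosF hp1 ω)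
  have hderiv : ∀ x ∈ Ioo (0:ℝ) 1, HasDerivWithinAt K
      (dphi p x * Real.cos (ω * Fp p x) - ω * rr p x * Real.sin (ω * Fp p x)) (Ioi x) x :=
    fun x hx => (hasDeriv_K hp1 hp2 ω hx).hasDerivWithinAt
  have hint2 : IntervalIntegrable
      (fun x => ω * (rr p x * Real.sin (ω * Fp p x))) volume 0 1 :=
    (int_rr_sinF hp1 hp2 ω).const_mul ω
  have hint : IntervalIntegrable
      (fun x => dphi p x * Real.cos (ω * Fp p x) - ω * rr p x * Real.sin (ω * Fp p x))
      volume 0 1 := by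
    have := (int_dphi_cosF hp1 hp2 ω).sub hint2
    simpa [mul_assoc] using this
  have key := intervalIntegral.integral_eq_sub_of_hasDeriv_right_of_le
    (by norm_num : (0:ℝ) ≤ 1) hcont hderiv hint
  have hK1 : K 1 = 0 := by rw [hK]; simp only [phi_one hp1 hp2, zero_mul]
  have hK0 : K 0 = 0 := by rw [hK]; simp only [phi_zero hp1, zero_mul]
  rw [hK1, hK0, sub_zero] at key
  have hsplit : ∫ x in (0:ℝ)..1,
      (dphi p x * Real.cos (ω * Fp p x) - ω * rr p x * Real.sin (ω * Fp p x)) =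
      (∫ x in (0:ℝ)..1, dphi p x * Real.cos (ω * Fp p x)) -
        ω * ∫ x in (0:ℝ)..1, rr p x * Real.sin (ω * Fp p x) := by
    rw [← intervalIntegral.integral_const_mul]
    rw [← intervalIntegral.integral_sub (int_dphi_cosF hp1 hp2 ω) hint2]
    congr 1
    ext x
    ring
  rw [hsplit] at key
  linarith [key]

include hp1 hp2 in
lemma FTCphi1 : ∫ t in (0:ℝ)..(ts p), dphi p t = cp p := by
  have hts := ts_mem hp1 hp2
  have key := intervalIntegral.integral_eq_sub_of_hasDeriv_right_of_le hts.1.le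
    ((contOn_phi hp1 hp2).mono (Icc_subset_Icc le_rfl hts.2.le))
    (fun x hx => (hasDeriv_phi hp1 hp2 ⟨hx.1, hx.2.trans hts.2⟩).hasDerivWithinAt)
    ((dphi_intInt hp1 hp2).mono_set (by
      rw [uIcc_of_le hts.1.le, uIcc_of_le (by norm_num : (0:ℝ) ≤ 1)]
      exact Icc_subset_Icc le_rfl hts.2.le))
  rw [key, phi_ts hp1 hp2, phi_zero hp1, sub_zero]

include hp1 hp2 in
lemma FTCphi2 : ∫ t in (ts p)..1, dphi p t = -(cp p) := by
  have hts := ts_mem hp1 hp2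
  have key := intervalIntegral.integral_eq_sub_of_hasDeriv_right_of_le hts.2.le
    ((contOn_phi hp1 hp2).mono (Icc_subset_Icc hts.1.le le_rfl))
    (fun x hx => (hasDeriv_phi hp1 hp2 ⟨hts.1.trans hx.1, hx.2⟩).hasDerivWithinAt)
    ((dphi_intInt hp1 hp2).mono_set (by
      rw [uIcc_of_le hts.2.le, uIcc_of_le (by norm_num : (0:ℝ) ≤ 1)]
      exact Icc_subset_Icc hts.1.le le_rfl))
  rw [key, phi_ts hp1 hp2, phi_one hp1 hp2, zero_sub]

end IBP


section Sign

variable (hp1 : 1 < p) (hp2 : p < 2)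

include hp1 in
lemma ts_rpow : ts p ^ p = p - 1 := by
  have hp0 := ppos hp1
  rw [ts, ← Real.rpow_mul (by linarith : (0:ℝ) ≤ p - 1), one_div,
    inv_mul_cancel₀ hp0.ne', Real.rpow_one]

include hp1 hp2 in
lemma dphi_nonneg_left {t : ℝ} (ht : t ∈ Icc 0 (ts p)) : 0 ≤ dphi p t := by
  have hts := ts_mem hp1 hp2
  rcases eq_or_lt_of_le ht.1 with h | h
  · rw [dphi, ← h, Real.zero_rpow (by linarith : p - 2 ≠ 0), zero_mul, zero_mul]
  · have ht1 : t < 1 := lt_of_le_of_lt ht.2 hts.2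
    have h1 : 0 ≤ t ^ (p-2) := Real.rpow_nonneg h.le _
    have h2 : 0 ≤ (1 - t ^ p) ^ ((2-2*p)/p) :=
      Real.rpow_nonneg (base_nonneg hp1 h.le ht1.le) _
    have h3 : 0 ≤ (p-1) - t ^ p := by
      have := Real.rpow_le_rpow h.le ht.2 (ppos hp1).le
      rw [ts_rpow hp1] at this
      linarith
    unfold dphi
    exact mul_nonneg (mul_nonneg h1 h2) h3

include hp1 hp2 in
lemma dphi_pos_left {t : ℝ} (ht : t ∈ Ioo 0 (ts p)) : 0 < dphi p t := by
  have hts := ts_mem hp1 hp2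
  have ht1 : t < 1 := lt_trans ht.2 hts.2
  have h1 : 0 < t ^ (p-2) := Real.rpow_pos_of_pos ht.1 _
  have h2 : 0 < (1 - t ^ p) ^ ((2-2*p)/p) :=
    Real.rpow_pos_of_pos (base_pos hp1 ht.1.le ht1) _
  have h3 : 0 < (p-1) - t ^ p := by
    have := Real.rpow_lt_rpow ht.1.le ht.2 (ppos hp1)
    rw [ts_rpow hp1] at this
    linarith
  unfold dphi
  exact mul_pos (mul_pos h1 h2) h3

include hp1 hp2 in
lemma dphi_nonpos_right {t : ℝ} (ht : t ∈ Icc (ts p) 1) : dphi p t ≤ 0 := by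
  have hts := ts_mem hp1 hp2
  have ht0 : 0 < t := lt_of_lt_of_le hts.1 ht.1
  have h1 : 0 ≤ t ^ (p-2) := Real.rpow_nonneg ht0.le _
  have h2 : 0 ≤ (1 - t ^ p) ^ ((2-2*p)/p) :=
    Real.rpow_nonneg (base_nonneg hp1 ht0.le ht.2) _
  have h3 : (p-1) - t ^ p ≤ 0 := by
    have := Real.rpow_le_rpow hts.1.le ht.1 (ppos hp1).le
    rw [ts_rpow hp1] at this
    linarith
  unfold dphi
  exact mul_nonpos_of_nonneg_of_nonpos (mul_nonneg h1 h2) h3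

include hp1 hp2 in
lemma exists_t0 {ω : ℝ} (hω : 0 < ω) :
    ∃ t₀ ∈ Ioo 0 (ts p), 0 < ω * Fp p t₀ ∧ ω * Fp p t₀ < π := by
  have hts := ts_mem hp1 hp2
  have hc : ContinuousWithinAt (Fp p) (Icc 0 1) 0 :=
    (contF hp1) 0 (by constructor <;> norm_num)
  have htend : Filter.Tendsto (Fp p) (nhdsWithin 0 (Ioi 0)) (nhds 0) := by
    have h1 : nhdsWithin (0:ℝ) (Ioc 0 1) ≤ nhdsWithin 0 (Icc 0 1) :=
      nhdsWithin_mono 0 Ioc_subset_Icc_self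
    rw [← nhdsWithin_Ioc_eq_nhdsGT (by norm_num : (0:ℝ) < 1)]
    have := hc.tendsto
    rw [F_zero] at this
    exact this.mono_left h1
  have hpw : 0 < π / ω := by positivity
  have hev1 : ∀ᶠ t in nhdsWithin 0 (Ioi 0), Fp p t < π / ω :=
    htend.eventually (eventually_lt_nhds hpw)
  have hev2 : ∀ᶠ t in nhdsWithin (0:ℝ) (Ioi 0), t < ts p :=
    eventually_nhdsWithin_of_eventually_nhds (eventually_lt_nhds hts.1)
  have hev3 : ∀ᶠ t in nhdsWithin (0:ℝ) (Ioi 0), 0 < t :=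
    eventually_mem_nhdsWithin
  obtain ⟨t₀, h1, h2, h3⟩ := (hev1.and (hev2.and hev3)).exists
  refine ⟨t₀, ⟨h3, h2⟩, ?_, ?_⟩
  · have hF := F_pos hp1 h3 (by linarith [hts.2])
    positivity
  · have : Fp p t₀ < π / ω := h1
    calc ω * Fp p t₀ < ω * (π / ω) := by
          apply mul_lt_mul_of_pos_left this hω
    _ = π := by field_simp

end Sign


section Core

variable (hp1 : 1 < p) (hp2 : p < 2)

include hp1 hp2 in
lemma cp_pos : 0 < cp p :=
  mul_pos (Real.rpow_pos_of_pos (by linarith) _) (Real.rpow_pos_of_pos (by linarith) _)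

include hp1 hp2 in
lemma pos_part {ω σ : ℝ} (hω : 0 < ω) (hσ : σ = 1 ∨ σ = -1) :
    0 < ∫ t in (0:ℝ)..(ts p), dphi p t * (1 - σ * Real.cos (ω * Fp p t)) := by
  have hts := ts_mem hp1 hp2
  set G : ℝ → ℝ := fun t => dphi p t * (1 - σ * Real.cos (ω * Fp p t)) with hG
  have hGeq : G = fun t => dphi p t - σ * (dphi p t * Real.cos (ω * Fp p t)) := by
    funext t; rw [hG]; ring
  have hGint : IntervalIntegrable G volume 0 (ts p) := by
    rw [hGeq]
    refine IntervalIntegrable.sub ?_ ?_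
    · exact (dphi_intInt hp1 hp2).mono_set (by
        rw [uIcc_of_le hts.1.le, uIcc_of_le (by norm_num : (0:ℝ) ≤ 1)]
        exact Icc_subset_Icc le_rfl hts.2.le)
    · exact ((int_dphi_cosF hp1 hp2 ω).const_mul σ).mono_set (by
        rw [uIcc_of_le hts.1.le, uIcc_of_le (by norm_num : (0:ℝ) ≤ 1)]
        exact Icc_subset_Icc le_rfl hts.2.le)
  have hσabs : |σ| = 1 := by rcases hσ with h | h <;> rw [h] <;> norm_num
  have hGnonneg : ∀ u ∈ Icc 0 (ts p), 0 ≤ G u := by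
    intro u hu
    rw [hG]
    refine mul_nonneg (dphi_nonneg_left hp1 hp2 hu) ?_
    have : |σ * Real.cos (ω * Fp p u)| ≤ 1 := by
      rw [abs_mul, hσabs, one_mul]
      exact Real.abs_cos_le_one _
    have := le_of_abs_le this
    linarith
  -- the point of positivity
  obtain ⟨t₀, ht₀, hθ0, hθπ⟩ := exists_t0 hp1 hp2 hω
  have ht01 : t₀ ∈ Ioo (0:ℝ) 1 := ⟨ht₀.1, lt_trans ht₀.2 hts.2⟩
  have hGcontOn : ContinuousOn G (Ioo 0 1) := by
    rw [hG]
    refine (contOn_dphi_Ioo hp1).mul ?_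
    exact continuousOn_const.sub (continuousOn_const.mul
      ((contOn_cosF hp1 ω).mono Ioo_subset_Icc_self))
  have hGcont : ContinuousAt G t₀ :=
    hGcontOn.continuousAt (Ioo_mem_nhds ht01.1 ht01.2)
  have hGpos : 0 < G t₀ := by
    rw [hG]
    refine mul_pos (dphi_pos_left hp1 hp2 ht₀) ?_
    have hmem0 : (0:ℝ) ∈ Icc (0:ℝ) π := ⟨le_rfl, Real.pi_pos.le⟩
    have hmemθ : ω * Fp p t₀ ∈ Icc (0:ℝ) π := ⟨hθ0.le, hθπ.le⟩
    have hmemπ : π ∈ Icc (0:ℝ) π := ⟨Real.pi_pos.le, le_rfl⟩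
    have hlt1 : Real.cos (ω * Fp p t₀) < 1 := by
      have := Real.strictAntiOn_cos hmem0 hmemθ hθ0
      rwa [Real.cos_zero] at this
    have hgtm1 : -1 < Real.cos (ω * Fp p t₀) := by
      have := Real.strictAntiOn_cos hmemθ hmemπ hθπ
      rwa [Real.cos_pi] at this
    rcases hσ with h | h <;> rw [h] <;> linarith
  have hev : ∀ᶠ x in nhds t₀, 0 < G x :=
    hGcont.eventually (eventually_gt_nhds hGpos)
  rw [Metric.eventually_nhds_iff] at hev
  obtain ⟨ε, hε, hball⟩ := hev
  set a := max (t₀ - ε/2) (t₀/2) with ha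
  set b := min (t₀ + ε/2) ((t₀ + ts p)/2) with hb
  have hat : a < t₀ := max_lt (by linarith) (by linarith [ht₀.1])
  have htb : t₀ < b := lt_min (by linarith) (by linarith [ht₀.2])
  have ha0 : 0 ≤ a := le_trans (by linarith [ht₀.1] : (0:ℝ) ≤ t₀/2) (le_max_right _ _)
  have hbts : b ≤ ts p := le_trans (min_le_right _ _) (by linarith [ht₀.2])
  have hsub : ∀ x ∈ Ioo a b, 0 < G x := by
    intro x hx
    apply hball
    rw [Real.dist_eq, abs_sub_lt_iff]
    have h1 : t₀ - ε/2 ≤ a := le_max_left _ _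
    have h2 : b ≤ t₀ + ε/2 := min_le_left _ _
    constructor <;> [linarith [hx.2]; linarith [hx.1]]
  have hab : a < b := lt_trans hat htb
  have hint1 : IntervalIntegrable G volume 0 a := hGint.mono_set (by
    rw [uIcc_of_le ha0, uIcc_of_le hts.1.le]
    exact Icc_subset_Icc le_rfl (by linarith))
  have hint2 : IntervalIntegrable G volume a b := hGint.mono_set (by
    rw [uIcc_of_le hab.le, uIcc_of_le hts.1.le]
    exact Icc_subset_Icc ha0 hbts)
  have hint3 : IntervalIntegrable G volume b (ts p) := hGint.mono_set (by
    rw [uIcc_of_le (by linarith : b ≤ ts p), uIcc_of_le hts.1.le]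
    exact Icc_subset_Icc (by linarith) le_rfl)
  have hsplit1 : (∫ t in (0:ℝ)..a, G t) + (∫ t in a..b, G t) = ∫ t in (0:ℝ)..b, G t :=
    intervalIntegral.integral_add_adjacent_intervals hint1 hint2
  have hsplit2 : (∫ t in (0:ℝ)..b, G t) + (∫ t in b..(ts p), G t) = ∫ t in (0:ℝ)..(ts p), G t :=
    intervalIntegral.integral_add_adjacent_intervals (hint1.trans hint2) hint3
  have hpos_mid : 0 < ∫ t in a..b, G t :=
    intervalIntegral_pos_of_pos_on hint2 hsub hab
  have hnn1 : 0 ≤ ∫ t in (0:ℝ)..a, G t := by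
    apply intervalIntegral.integral_nonneg ha0
    intro u hu
    exact hGnonneg u ⟨hu.1, le_trans hu.2 (by linarith)⟩
  have hnn3 : 0 ≤ ∫ t in b..(ts p), G t := by
    apply intervalIntegral.integral_nonneg (by linarith : b ≤ ts p)
    intro u hu
    exact hGnonneg u ⟨le_trans (by linarith : (0:ℝ) ≤ b) hu.1, hu.2⟩
  linarith

include hp1 hp2 in
lemma core_bound {ω : ℝ} (hω : 0 < ω) :
    |∫ t in (0:ℝ)..1, dphi p t * Real.cos (ω * Fp p t)| < 2 * cp p := by
  have hts := ts_mem hp1 hp2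
  have hcp := cp_pos hp1 hp2
  set X := ∫ t in (0:ℝ)..(ts p), dphi p t * Real.cos (ω * Fp p t) with hX
  set Y := ∫ t in (ts p)..1, dphi p t * Real.cos (ω * Fp p t) with hY
  have hintX : IntervalIntegrable (fun t => dphi p t * Real.cos (ω * Fp p t)) volume 0 (ts p) :=
    (int_dphi_cosF hp1 hp2 ω).mono_set (by
      rw [uIcc_of_le hts.1.le, uIcc_of_le (by norm_num : (0:ℝ) ≤ 1)]
      exact Icc_subset_Icc le_rfl hts.2.le)
  have hintY : IntervalIntegrable (fun t => dphi p t * Real.cos (ω * Fp p t)) volume (ts p) 1 :=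
    (int_dphi_cosF hp1 hp2 ω).mono_set (by
      rw [uIcc_of_le hts.2.le, uIcc_of_le (by norm_num : (0:ℝ) ≤ 1)]
      exact Icc_subset_Icc hts.1.le le_rfl)
  have hint_dphi1 : IntervalIntegrable (dphi p) volume 0 (ts p) :=
    (dphi_intInt hp1 hp2).mono_set (by
      rw [uIcc_of_le hts.1.le, uIcc_of_le (by norm_num : (0:ℝ) ≤ 1)]
      exact Icc_subset_Icc le_rfl hts.2.le)
  have hint_dphi2 : IntervalIntegrable (dphi p) volume (ts p) 1 :=
    (dphi_intInt hp1 hp2).mono_set (by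
      rw [uIcc_of_le hts.2.le, uIcc_of_le (by norm_num : (0:ℝ) ≤ 1)]
      exact Icc_subset_Icc hts.1.le le_rfl)
  have hXY : (∫ t in (0:ℝ)..1, dphi p t * Real.cos (ω * Fp p t)) = X + Y :=
    (intervalIntegral.integral_add_adjacent_intervals hintX hintY).symm
  -- bound for Y
  have hYb : |Y| ≤ cp p := by
    have habs : |Y| ≤ ∫ t in (ts p)..1, |dphi p t * Real.cos (ω * Fp p t)| :=
      intervalIntegral.abs_integral_le_integral_abs hts.2.le
    have hmono : (∫ t in (ts p)..1, |dphi p t * Real.cos (ω * Fp p t)|) ≤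
        ∫ t in (ts p)..1, -dphi p t := by
      apply intervalIntegral.integral_mono_on hts.2.le hintY.abs hint_dphi2.neg
      intro x hx
      rw [abs_mul]
      have h1 : |dphi p x| = -dphi p x := abs_of_nonpos (dphi_nonpos_right hp1 hp2 hx)
      calc |dphi p x| * |Real.cos (ω * Fp p x)| ≤ |dphi p x| * 1 :=
            mul_le_mul_of_nonneg_left (Real.abs_cos_le_one _) (abs_nonneg _)
      _ = -dphi p x := by rw [mul_one, h1]
    have hval : (∫ t in (ts p)..1, -dphi p t) = cp p := by
      rw [intervalIntegral.integral_neg, FTCphi2 hp1 hp2, neg_neg]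
    linarith
  -- strict bounds for X
  have hval1 : (∫ t in (0:ℝ)..(ts p), dphi p t) = cp p := FTCphi1 hp1 hp2
  have hdiff : ∀ σ : ℝ, σ = 1 ∨ σ = -1 →
      (∫ t in (0:ℝ)..(ts p), dphi p t * (1 - σ * Real.cos (ω * Fp p t))) = cp p - σ * X := by
    intro σ hσ
    have heq : (fun t => dphi p t * (1 - σ * Real.cos (ω * Fp p t))) =
        fun t => dphi p t - σ * (dphi p t * Real.cos (ω * Fp p t)) := by
      funext t; ring
    rw [heq, intervalIntegral.integral_sub hint_dphi1 (hintX.const_mul σ),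
      intervalIntegral.integral_const_mul, hval1, ← hX]
  have h1 := pos_part hp1 hp2 hω (Or.inl rfl)
  have h2 := pos_part hp1 hp2 hω (Or.inr rfl)
  rw [hdiff 1 (Or.inl rfl)] at h1
  rw [hdiff (-1) (Or.inr rfl)] at h2
  have hXb : |X| < cp p := by
    rw [abs_lt]
    constructor <;> nlinarith
  rw [hXY]
  calc |X + Y| ≤ |X| + |Y| := abs_add_le _ _
  _ < cp p + cp p := by linarith
  _ = 2 * cp p := by ring

end Core


section Abound

variable (hp1 : 1 < p) (hp2 : p < 2)

include hp1 hp2 in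
lemma A_bound {ω : ℝ} (hω : 0 < ω) :
    |∫ t in (0:ℝ)..1, Real.cos (ω * Fp p t)| < 2 * cp p / ω^2 := by
  have hIBP : (∫ t in (0:ℝ)..1, dphi p t * Real.cos (ω * Fp p t)) =
      ω^2 * ∫ t in (0:ℝ)..1, Real.cos (ω * Fp p t) := by
    rw [IBP2 hp1 hp2 ω, IBP1 hp1 hp2 ω]
    ring
  have hcore := core_bound hp1 hp2 hω
  rw [hIBP, abs_mul, abs_of_nonneg (by positivity : (0:ℝ) ≤ ω^2)] at hcore
  rw [lt_div_iff₀ (by positivity : (0:ℝ) < ω^2)]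
  linarith [hcore]

end Abound

end SinP

open SinP in
theorem fourier_coeff_bound_p_lt_two (p : ℝ) (hp1 : 1 < p) (hp2 : p < 2) (s : ℝ → ℝ)
    (hinv₁ : ∀ y ∈ Icc (0:ℝ) 1, s (Fp p y) = y)
    (hinv₂ : ∀ x ∈ Icc (0:ℝ) (pip p / 2), Fp p (s x) = x)
    (hodd : ∀ x, s (-x) = -s x)
    (hsym : ∀ x, s (pip p / 2 - x) = s (pip p / 2 + x))
    (j : ℕ) (hj : 1 ≤ j) :
    |2 * ∫ x in (0:ℝ)..1, deriv s (pip p * x) * Real.cos (j * π * x)| <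
      8 * pip p / ((j : ℝ)^2 * π^2) * cp p := by
  have hP : 0 < pip p := pip_pos hp1
  have hj0 : (0:ℝ) < (j : ℝ) := by exact_mod_cast hj
  have hπ := Real.pi_pos
  set P := pip p with hPdef
  set ω : ℝ := (j : ℝ) * π / P with hω
  have hωpos : 0 < ω := by positivity
  have hωP : ω * P = (j : ℝ) * π := by
    rw [hω]; field_simp
  set g : ℝ → ℝ := fun u => deriv s u * Real.cos (ω * u) with hg
  have hcP : 0 < cp p := cp_pos hp1 hp2
  -- reflection of s
  have hsrefl : ∀ u, s (P - u) = s u := by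
    intro u
    have := hsym (P/2 - u)
    have e1 : P/2 - (P/2 - u) = u := by ring
    have e2 : P/2 + (P/2 - u) = P - u := by ring
    rw [e1, e2] at this
    exact this.symm
  have hfun : (fun y => s (P - y)) = s := funext hsrefl
  have hds : ∀ u, deriv s u = -deriv s (P - u) := by
    intro u
    conv_lhs => rw [← hfun]
    exact deriv_comp_const_sub ..
  set c : ℝ := (-1 : ℝ)^j with hc
  have hc2 : c * c = 1 := by
    rw [hc, ← pow_add, show j + j = 2 * j by ring, pow_mul]
    norm_num
  have hgrefl : ∀ u, g u = (-c) * g (P - u) := by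
    intro u
    rw [hg]
    simp only
    rw [hds u]
    have hcos : Real.cos (ω * (P - u)) = c * Real.cos (ω * u) := by
      have : ω * (P - u) = (j : ℝ) * π - ω * u := by
        rw [mul_sub, hωP]
      rw [this, Real.cos_nat_mul_pi_sub]
    rw [hcos]
    linear_combination (deriv s (P - u) * Real.cos (ω * u)) * hc2
  -- integrability of g on the two halves
  have hg_int1 : IntervalIntegrable g volume 0 (P/2) := by
    rw [intervalIntegrable_iff, uIoc_of_le (by linarith : (0:ℝ) ≤ P/2), IntegrableOn,
      ← Measure.restrict_congr_set Ioo_ae_eq_Ioc]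
    refine Integrable.mono' (integrable_const 1)
      (((measurable_deriv s).mul
        ((Real.continuous_cos.comp (continuous_const.mul continuous_id)).measurable)).aestronglyMeasurable.restrict) ?_
    rw [ae_restrict_iff' measurableSet_Ioo]
    filter_upwards with u hu
    have hb := deriv_s_bound hp1 hinv₁ hinv₂ hu
    rw [hg]
    simp only
    rw [Real.norm_eq_abs, abs_mul]
    have h1 : |deriv s u| ≤ 1 := abs_le.mpr ⟨by linarith [hb.1], hb.2⟩
    have h2 : |Real.cos (ω * u)| ≤ 1 := Real.abs_cos_le_one _
    nlinarith [abs_nonneg (deriv s u), abs_nonneg (Real.cos (ω * u))]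
  have hg_int2 : IntervalIntegrable g volume (P/2) P := by
    have h := (hg_int1.comp_sub_left P).const_mul (-c)
    have he : (fun x => (-c) * g (P - x)) = g := by
      funext x
      rw [← hgrefl x]
    rw [he] at h
    have e1 : P - P/2 = P/2 := by ring
    have e2 : P - 0 = P := by ring
    rw [e1, e2] at h
    exact h.symm
  -- the three integral identities
  have hA := subst_lemma hp1 hinv₁ hinv₂ ω
  set A : ℝ := ∫ t in (0:ℝ)..1, Real.cos (ω * Fp p t) with hAdef
  have hhalf1 : (∫ u in (0:ℝ)..(P/2), g u) = A := hA
  have hhalf2 : (∫ u in (P/2)..P, g u) = (-c) * A := by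
    have hstep : (∫ u in (P/2)..P, g u) = ∫ u in (P/2)..P, (-c) * g (P - u) := by
      apply intervalIntegral.integral_congr
      intro x _
      exact hgrefl x
    rw [hstep, intervalIntegral.integral_const_mul]
    have hsub := intervalIntegral.integral_comp_sub_left (a := P/2) (b := P) g P
    rw [show P - P/2 = P/2 by ring, show P - P = 0 by ring] at hsub
    rw [hsub, hhalf1]
  have htot : (∫ u in (0:ℝ)..P, g u) = (1 - c) * A := by
    rw [← intervalIntegral.integral_add_adjacent_intervals hg_int1 hg_int2,
      hhalf1, hhalf2]
    ring
  have hI : (∫ x in (0:ℝ)..1, deriv s (P * x) * Real.cos ((j:ℝ) * π * x)) =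
      P⁻¹ * ((1 - c) * A) := by
    have hstep : (∫ x in (0:ℝ)..1, deriv s (P * x) * Real.cos ((j:ℝ) * π * x)) =
        ∫ x in (0:ℝ)..1, g (P * x) := by
      apply intervalIntegral.integral_congr
      intro x _
      rw [hg]
      simp only
      rw [show ω * (P * x) = (j:ℝ) * π * x by rw [← mul_assoc, hωP]]
    rw [hstep]
    have hcomp := intervalIntegral.integral_comp_mul_left (a := (0:ℝ)) (b := 1) g hP.ne'
    rw [mul_zero, mul_one] at hcomp
    rw [hcomp, htot, smul_eq_mul]
  rw [hI]
  rcases Nat.even_or_odd j with hpar | hpar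
  · have hceq : c = 1 := by rw [hc]; exact hpar.neg_one_pow
    rw [hceq]
    simp only [sub_self, zero_mul, mul_zero, abs_zero]
    positivity
  · have hceq : c = -1 := by rw [hc]; exact hpar.neg_one_pow
    rw [hceq]
    have hAb := A_bound hp1 hp2 hωpos
    have hlhs : |2 * (P⁻¹ * ((1 - -1) * A))| = 4 * P⁻¹ * |A| := by
      rw [show 2 * (P⁻¹ * ((1 - -1) * A)) = (4 * P⁻¹) * A by ring, abs_mul,
        abs_of_pos (by positivity : (0:ℝ) < 4 * P⁻¹)]
    rw [hlhs]
    have hrhs : 8 * P / ((j:ℝ)^2 * π^2) * cp p = 4 * P⁻¹ * (2 * cp p / ω^2) := by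
      rw [hω]
      field_simp
      ring
    rw [hrhs]
    exact mul_lt_mul_of_pos_left hAb (by positivity : (0:ℝ) < 4 * P⁻¹)
end
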